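/- arXiv:0707.2728 — 3 statements merged into one kernel-verified Lean document; each statement's English description precedes it below -/
import Mathlib

section
/- For v>-1, 0<q<1, a>0 and nonzero complex numbers y,z with y^2 \neq z^2, the Jackson q-integral \int_0^a j_v(yt,q^2) j_v(zt,q^2) t^{2v+1} d_q t equals \frac{1-q}{1-q^{2v+2}} a^{2v+2} \cdot \frac{y^2 j_{v+1}(ay,q^2) j_v(a q^{-1} z, q^2) - z^2 j_{v+1}(az,q^2) j_v(a q^{-1} y, q^2)}{y^2 - z^2}. -/
noncomputable def qPoch (a q : ℝ) (n : ℕ) : ℝ := ∏ i ∈ Finset.range n, (1 - a * q ^ i)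

noncomputable def qPochInf (a q : ℝ) : ℝ := ∏' i : ℕ, (1 - a * q ^ i)

/-- Normalized Hahn–Exton q-Bessel function `j_v(z, q²)` (complex argument). -/
noncomputable def jv (v q : ℝ) (z : ℂ) : ℂ :=
  ∑' n : ℕ, (-1 : ℂ) ^ n * (q : ℂ) ^ (n * (n + 1)) * z ^ (2 * n) /
    ((qPoch (q ^ 2) (q ^ 2) n : ℝ) * (qPoch (q ^ (2 * v + 2 : ℝ)) (q ^ 2) n : ℝ) : ℝ)

/-- Normalized Hahn–Exton q-Bessel function `j_v(x, q²)` (real argument). -/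
noncomputable def jvR (v q x : ℝ) : ℝ :=
  ∑' n : ℕ, (-1 : ℝ) ^ n * q ^ (n * (n + 1)) * x ^ (2 * n) /
    (qPoch (q ^ 2) (q ^ 2) n * qPoch (q ^ (2 * v + 2 : ℝ)) (q ^ 2) n)

noncomputable def cqv (q v : ℝ) : ℝ :=
  (1 / (1 - q)) * qPochInf (q ^ (2 * v + 2 : ℝ)) (q ^ 2) / qPochInf (q ^ 2) (q ^ 2)

/-- Jackson q-integral on `[0,a]`. -/
noncomputable def qInt0 (q a : ℝ) (f : ℝ → ℝ) : ℝ :=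
  (1 - q) * a * ∑' n : ℕ, q ^ n * f (a * q ^ n)

/-- Jackson q-integral on `[0,∞)`. -/
noncomputable def qIntInf (q : ℝ) (f : ℝ → ℝ) : ℝ :=
  (1 - q) * ∑' n : ℤ, q ^ n * f (q ^ n)

/-- Complex-valued Jackson q-integral on `[0,a]`. -/
noncomputable def qIntC0 (q a : ℝ) (f : ℝ → ℂ) : ℂ :=
  ((1 - q) * a : ℝ) * ∑' n : ℕ, (q ^ n : ℝ) * f (a * q ^ n)

/-- The operator `T_a^v`. -/
noncomputable def Tav (q v a : ℝ) (u : ℝ → ℝ) (x : ℝ) : ℝ :=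
  cqv q v * qInt0 q a (fun t => u t * jvR v q (x * t) * t ^ (2 * v + 1 : ℝ))

/-- The q-Bessel Fourier transform `𝓕_{q,v}`. -/
noncomputable def Fqv (q v : ℝ) (f : ℝ → ℝ) (x : ℝ) : ℝ :=
  cqv q v * qIntInf q (fun t => f t * jvR v q (x * t) * t ^ (2 * v + 1 : ℝ))

/-- Membership in `L²_{q,v,a}` (functions on `[0,a]_q`). -/
def memL2a (q v a : ℝ) (f : ℝ → ℝ) : Prop :=
  Summable (fun n : ℕ => q ^ n * (f (a * q ^ n)) ^ 2 * (a * q ^ n) ^ (2 * v + 1 : ℝ))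

/-- Membership in `L²_{q,2,v}` (even functions on `ℝ_q`, given on `ℝ_q⁺`). -/
def memL2 (q v : ℝ) (f : ℝ → ℝ) : Prop :=
  Summable (fun n : ℤ => q ^ n * (f (q ^ n)) ^ 2 * ((q : ℝ) ^ n) ^ (2 * v + 1 : ℝ))

/-- Inner product on `L²_{q,2,v}`. -/
noncomputable def qInner (q v : ℝ) (f g : ℝ → ℝ) : ℝ :=
  qIntInf q (fun t => f t * g t * t ^ (2 * v + 1 : ℝ))

/-- The kernel `k(x,y)`. -/
noncomputable def kker (q v a x y : ℝ) : ℝ :=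
  cqv q v ^ 2 * qInt0 q a (fun t => jvR v q (x * t) * jvR v q (y * t) * t ^ (2 * v + 1 : ℝ))

namespace QL

/-- the general term of the jv series -/
noncomputable def trm (v q : ℝ) (z : ℂ) (n : ℕ) : ℂ :=
  (-1 : ℂ) ^ n * (q : ℂ) ^ (n * (n + 1)) * z ^ (2 * n) /
    ((qPoch (q ^ 2) (q ^ 2) n : ℝ) * (qPoch (q ^ (2 * v + 2 : ℝ)) (q ^ 2) n : ℝ) : ℝ)

lemma jv_eq (v q : ℝ) (z : ℂ) : jv v q z = ∑' n, trm v q z n := rfl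

lemma qPoch_succ (a q : ℝ) (n : ℕ) : qPoch a q (n + 1) = qPoch a q n * (1 - a * q ^ n) :=
  Finset.prod_range_succ _ _

lemma qPoch_pos {a q : ℝ} (ha0 : 0 ≤ a) (ha1 : a < 1) (hq0 : 0 ≤ q) (hq1 : q ≤ 1) (n : ℕ) :
    0 < qPoch a q n := by
  apply Finset.prod_pos
  intro i _
  have h1 : q ^ i ≤ 1 := pow_le_one₀ hq0 hq1
  nlinarith [pow_nonneg hq0 i]

lemma qPoch_factor_pos {a q : ℝ} (ha0 : 0 ≤ a) (ha1 : a < 1) (hq0 : 0 ≤ q) (hq1 : q ≤ 1) (n : ℕ) :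
    0 < 1 - a * q ^ n := by
  have h1 : q ^ n ≤ 1 := pow_le_one₀ hq0 hq1
  nlinarith [pow_nonneg hq0 n]

section
variable {v q : ℝ} (hq0 : 0 < q) (hq1 : q < 1) (hv : -1 < v)

omit hq1 in
include hq0 in
lemma hQ0 : 0 < q ^ 2 := by positivity

include hq0 hq1 in
lemma hQ1 : q ^ 2 < 1 := by nlinarith

omit hq1 hv in
include hq0 in
lemma hp0 : 0 < q ^ (2 * v + 2 : ℝ) := Real.rpow_pos_of_pos hq0 _

include hq0 hq1 hv in
lemma hp1 : q ^ (2 * v + 2 : ℝ) < 1 :=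
  Real.rpow_lt_one (le_of_lt hq0) hq1 (by linarith)

include hq0 hq1 hv in
lemma den_pos (n : ℕ) :
    0 < qPoch (q ^ 2) (q ^ 2) n * qPoch (q ^ (2 * v + 2 : ℝ)) (q ^ 2) n :=
  mul_pos (qPoch_pos (le_of_lt (hQ0 hq0)) (hQ1 hq0 hq1) (le_of_lt (hQ0 hq0)) (le_of_lt (hQ1 hq0 hq1)) n)
    (qPoch_pos (le_of_lt (hp0 hq0)) (hp1 hq0 hq1 hv) (le_of_lt (hQ0 hq0)) (le_of_lt (hQ1 hq0 hq1)) n)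

include hq0 hq1 hv in
lemma norm_trm (z : ℂ) (n : ℕ) :
    ‖trm v q z n‖ = q ^ (n * (n + 1)) * ‖z‖ ^ (2 * n) /
      (qPoch (q ^ 2) (q ^ 2) n * qPoch (q ^ (2 * v + 2 : ℝ)) (q ^ 2) n) := by
  have hA := qPoch_pos (le_of_lt (hQ0 hq0)) (hQ1 hq0 hq1) (le_of_lt (hQ0 hq0)) (le_of_lt (hQ1 hq0 hq1)) (n := n)
  have hB := qPoch_pos (le_of_lt (hp0 hq0)) (hp1 hq0 hq1 hv) (le_of_lt (hQ0 hq0)) (le_of_lt (hQ1 hq0 hq1)) (n := n)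
  rw [trm, norm_div, norm_mul, norm_mul, norm_pow, norm_pow, norm_pow]
  simp only [norm_neg, norm_one, one_pow, one_mul, Complex.norm_real, Complex.norm_natCast]
  rw [Real.norm_eq_abs, Real.norm_eq_abs, abs_of_pos hq0, abs_of_pos (mul_pos hA hB)]

end
end QL
namespace QL
section
variable {v q : ℝ} (hq0 : 0 < q) (hq1 : q < 1) (hv : -1 < v)

include hq0 hq1 hv in
lemma summable_norm_trm (z : ℂ) : Summable (fun n => ‖trm v q z n‖) := by
  have hQ0' := hQ0 (q := q) hq0
  have hQ1' := hQ1 hq0 hq1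
  have hp0' := hp0 (v := v) hq0
  have hp1' := hp1 hq0 hq1 hv
  apply summable_of_ratio_norm_eventually_le (r := 1/2) (by norm_num)
  have htend : Filter.Tendsto (fun n : ℕ => (q^2) ^ (n+1) * ‖z‖^2) Filter.atTop (nhds 0) := by
    rw [show (0:ℝ) = 0 * ‖z‖^2 by ring]
    exact ((tendsto_pow_atTop_nhds_zero_of_lt_one (le_of_lt hQ0') hQ1').comp
      (Filter.tendsto_add_atTop_nat 1)).mul_const _
  have hc : (0:ℝ) < 1/2 * ((1 - q^2) * (1 - q ^ (2*v+2:ℝ))) := by nlinarith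
  filter_upwards [htend.eventually_le_const hc] with n hn
  have hA := qPoch_pos (le_of_lt hQ0') hQ1' (le_of_lt hQ0') (le_of_lt hQ1') (n := n)
  have hB := qPoch_pos (le_of_lt hp0') hp1' (le_of_lt hQ0') (le_of_lt hQ1') (n := n)
  have hfA : (0:ℝ) < 1 - q^2 * (q^2)^n := qPoch_factor_pos (le_of_lt hQ0') hQ1' (le_of_lt hQ0') (le_of_lt hQ1') n
  have hfB : (0:ℝ) < 1 - q ^ (2*v+2:ℝ) * (q^2)^n := qPoch_factor_pos (le_of_lt hp0') hp1' (le_of_lt hQ0') (le_of_lt hQ1') n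
  have hfA' : 1 - q^2 ≤ 1 - q^2 * (q^2)^n := by
    have : (q^2)^n ≤ 1 := pow_le_one₀ (le_of_lt hQ0') (le_of_lt hQ1')
    nlinarith
  have hfB' : 1 - q ^ (2*v+2:ℝ) ≤ 1 - q ^ (2*v+2:ℝ) * (q^2)^n := by
    have : (q^2)^n ≤ 1 := pow_le_one₀ (le_of_lt hQ0') (le_of_lt hQ1')
    nlinarith
  rw [Real.norm_eq_abs, Real.norm_eq_abs, abs_of_nonneg (norm_nonneg _), abs_of_nonneg (norm_nonneg _)]
  rw [norm_trm hq0 hq1 hv, norm_trm hq0 hq1 hv, qPoch_succ, qPoch_succ]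
  have e1 : q^((n+1)*(n+2)) = q^(n*(n+1)) * ((q^2)^n * q^2) := by
    rw [← pow_succ, ← pow_mul, ← pow_add]; congr 1; ring
  have e2 : ‖z‖^(2*(n+1)) = ‖z‖^(2*n) * ‖z‖^2 := by ring
  rw [e1, e2, ← mul_div_assoc, div_le_div_iff₀ (by positivity) (by positivity)]
  have key : ((q^2)^n * q^2) * ‖z‖^2 ≤ 1/2 * ((1 - q^2*(q^2)^n) * (1 - q ^ (2*v+2:ℝ)*(q^2)^n)) := by
    have h1 : (1 - q^2) * (1 - q ^ (2*v+2:ℝ)) ≤ (1 - q^2*(q^2)^n) * (1 - q ^ (2*v+2:ℝ)*(q^2)^n) :=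
      mul_le_mul hfA' hfB' (by nlinarith) (by nlinarith)
    calc ((q^2)^n * q^2) * ‖z‖^2 = (q^2)^(n+1) * ‖z‖^2 := by rw [pow_succ (q^2) n]
    _ ≤ 1/2 * ((1 - q^2) * (1 - q ^ (2*v+2:ℝ))) := hn
    _ ≤ _ := by linarith
  nlinarith [mul_le_mul_of_nonneg_left key
    (by positivity : (0:ℝ) ≤ q^(n*(n+1)) * ‖z‖^(2*n) *
      (qPoch (q ^ 2) (q ^ 2) n * qPoch (q ^ (2 * v + 2 : ℝ)) (q ^ 2) n))]

include hq0 hq1 hv in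
lemma summable_trm (z : ℂ) : Summable (trm v q z) :=
  (summable_norm_trm hq0 hq1 hv z).of_norm

end
end QL
namespace QL

lemma qPoch_succ' (a Q : ℝ) (n : ℕ) : qPoch a Q (n+1) = (1-a) * qPoch (a*Q) Q n := by
  unfold qPoch
  rw [Finset.prod_range_succ']
  simp only [pow_zero, mul_one]
  rw [mul_comm]
  congr 1
  apply Finset.prod_congr rfl
  intro k _
  rw [pow_succ']
  ring

end QL
namespace QL
section
variable {v q : ℝ} (hq0 : 0 < q) (hq1 : q < 1) (hv : -1 < v)

include hq0 hq1 hv in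
lemma trm_star (w : ℂ) (n : ℕ) :
    ((q ^ (2*v+2:ℝ) : ℝ) : ℂ) * trm v q ((q:ℂ)^2 * w) (n+1)
      - ((q:ℂ)^2 + ((q ^ (2*v+2:ℝ) : ℝ) : ℂ)) * trm v q ((q:ℂ) * w) (n+1)
      + (q:ℂ)^2 * trm v q w (n+1)
      = -(q:ℂ)^4 * w^2 * trm v q ((q:ℂ) * w) n := by
  have hQ0' := hQ0 (q := q) hq0
  have hQ1' := hQ1 hq0 hq1
  have hp0' := hp0 (v := v) hq0
  have hp1' := hp1 hq0 hq1 hv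
  have hA : qPoch (q^2) (q^2) n ≠ 0 :=
    (qPoch_pos (le_of_lt hQ0') hQ1' (le_of_lt hQ0') (le_of_lt hQ1') n).ne'
  have hB : qPoch (q ^ (2*v+2:ℝ)) (q^2) n ≠ 0 :=
    (qPoch_pos (le_of_lt hp0') hp1' (le_of_lt hQ0') (le_of_lt hQ1') n).ne'
  have hfA : (1 - q^2*(q^2)^n) ≠ 0 :=
    (qPoch_factor_pos (le_of_lt hQ0') hQ1' (le_of_lt hQ0') (le_of_lt hQ1') n).ne'
  have hfB : (1 - q ^ (2*v+2:ℝ)*(q^2)^n) ≠ 0 :=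
    (qPoch_factor_pos (le_of_lt hp0') hp1' (le_of_lt hQ0') (le_of_lt hQ1') n).ne'
  have hq : (q:ℂ) ≠ 0 := Complex.ofReal_ne_zero.mpr hq0.ne'
  have hA1 : qPoch (q^2) (q^2) (n+1) ≠ 0 := by rw [qPoch_succ]; exact mul_ne_zero hA hfA
  have hB1 : qPoch (q ^ (2*v+2:ℝ)) (q^2) (n+1) ≠ 0 := by rw [qPoch_succ]; exact mul_ne_zero hB hfB
  simp only [trm]
  rw [qPoch_succ, qPoch_succ]
  push_cast
  have hfAc : (1:ℂ) - (q:ℂ)^2*((q:ℂ)^2)^n ≠ 0 := by exact_mod_cast hfA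
  have hfBc : (1:ℂ) - ((q ^ (2*v+2:ℝ) : ℝ):ℂ)*((q:ℂ)^2)^n ≠ 0 := by exact_mod_cast hfB
  set Y : ℂ := (1:ℂ) - ((q ^ (2*v+2:ℝ) : ℝ):ℂ)*((q:ℂ)^2)^n with hY
  field_simp [Complex.ofReal_ne_zero.mpr hA, Complex.ofReal_ne_zero.mpr hB, hfAc, hfBc]
  rw [hY]
  ring
end
end QL
namespace QL
section
variable {v q : ℝ} (hq0 : 0 < q) (hq1 : q < 1) (hv : -1 < v)

lemma trm_zero (v q : ℝ) (z : ℂ) : trm v q z 0 = 1 := by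
  simp [trm, qPoch]

include hq0 in
lemma rpow_shift : q ^ (2*(v+1)+2:ℝ) = q ^ (2*v+2:ℝ) * q^2 := by
  have h2 : q ^ (2:ℝ) = q ^ 2 := by
    rw [show (2:ℝ) = ((2:ℕ):ℝ) by norm_num, Real.rpow_natCast]
  rw [show (2*(v+1)+2:ℝ) = (2*v+2) + 2 by ring, Real.rpow_add hq0, h2]

include hq0 hq1 hv in
lemma trm_R1 (w : ℂ) (n : ℕ) :
    trm v q ((q:ℂ)*w) (n+1) - trm v q w (n+1)
      = (q:ℂ)^2 * w^2 / (1 - ((q ^ (2*v+2:ℝ) : ℝ):ℂ)) * trm (v+1) q ((q:ℂ)*w) n := by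
  have hQ0' := hQ0 (q := q) hq0
  have hQ1' := hQ1 hq0 hq1
  have hp0' := hp0 (v := v) hq0
  have hp1' := hp1 hq0 hq1 hv
  have hA : qPoch (q^2) (q^2) n ≠ 0 :=
    (qPoch_pos (le_of_lt hQ0') hQ1' (le_of_lt hQ0') (le_of_lt hQ1') n).ne'
  have hB : qPoch (q ^ (2*v+2:ℝ)) (q^2) n ≠ 0 :=
    (qPoch_pos (le_of_lt hp0') hp1' (le_of_lt hQ0') (le_of_lt hQ1') n).ne'
  have hfA : (1 - q^2*(q^2)^n) ≠ 0 :=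
    (qPoch_factor_pos (le_of_lt hQ0') hQ1' (le_of_lt hQ0') (le_of_lt hQ1') n).ne'
  have hfB : (1 - q ^ (2*v+2:ℝ)*(q^2)^n) ≠ 0 :=
    (qPoch_factor_pos (le_of_lt hp0') hp1' (le_of_lt hQ0') (le_of_lt hQ1') n).ne'
  have hA1 : qPoch (q^2) (q^2) (n+1) ≠ 0 := by rw [qPoch_succ]; exact mul_ne_zero hA hfA
  have hB1 : qPoch (q ^ (2*v+2:ℝ)) (q^2) (n+1) ≠ 0 := by rw [qPoch_succ]; exact mul_ne_zero hB hfB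
  have h1p : (1 - q ^ (2*v+2:ℝ)) ≠ 0 := by
    have := hp1 hq0 hq1 hv; intro h; nlinarith
  have hBsh : qPoch (q ^ (2*(v+1)+2:ℝ)) (q^2) n = qPoch (q ^ (2*v+2:ℝ) * q^2) (q^2) n := by
    rw [rpow_shift hq0]
  have hBsh0 : qPoch (q ^ (2*v+2:ℝ) * q^2) (q^2) n ≠ 0 := by
    intro h
    have := qPoch_succ' (q ^ (2*v+2:ℝ)) (q^2) n
    rw [h, mul_zero] at this
    exact hB1 this
  simp only [trm, hBsh]
  push_cast
  have h1pc : (1:ℂ) - ((q ^ (2*v+2:ℝ) : ℝ) : ℂ) ≠ 0 := by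
    intro h
    apply h1p
    exact_mod_cast h
  rw [qPoch_succ' (q ^ (2*v+2:ℝ)), qPoch_succ (q^2)]
  push_cast
  have hfAc : (1:ℂ) - (q:ℂ)^2*((q:ℂ)^2)^n ≠ 0 := by exact_mod_cast hfA
  field_simp [Complex.ofReal_ne_zero.mpr hA, Complex.ofReal_ne_zero.mpr hBsh0, h1pc, hfAc]
  ring
end
end QL
namespace QL
section
variable {v q : ℝ} (hq0 : 0 < q) (hq1 : q < 1) (hv : -1 < v)

include hq0 hq1 hv in
lemma jv_star (w : ℂ) :
    ((q ^ (2*v+2:ℝ) : ℝ) : ℂ) * jv v q ((q:ℂ)^2 * w)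
      - ((q:ℂ)^2 + ((q ^ (2*v+2:ℝ) : ℝ) : ℂ)) * jv v q ((q:ℂ) * w)
      + (q:ℂ)^2 * jv v q w
      = -(q:ℂ)^4 * w^2 * jv v q ((q:ℂ) * w) := by
  set P : ℂ := ((q ^ (2*v+2:ℝ) : ℝ) : ℂ) with hP
  have S1 := summable_trm hq0 hq1 hv ((q:ℂ)^2 * w)
  have S2 := summable_trm hq0 hq1 hv ((q:ℂ) * w)
  have S3 := summable_trm hq0 hq1 hv w
  have hg : Summable (fun n => P * trm v q ((q:ℂ)^2*w) n
      - ((q:ℂ)^2 + P) * trm v q ((q:ℂ)*w) n + (q:ℂ)^2 * trm v q w n) :=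
    ((S1.mul_left P).sub (S2.mul_left _)).add (S3.mul_left _)
  have e1 : ((q ^ (2*v+2:ℝ) : ℝ) : ℂ) * jv v q ((q:ℂ)^2 * w)
      - ((q:ℂ)^2 + ((q ^ (2*v+2:ℝ) : ℝ) : ℂ)) * jv v q ((q:ℂ) * w)
      + (q:ℂ)^2 * jv v q w
      = ∑' n, (P * trm v q ((q:ℂ)^2*w) n
        - ((q:ℂ)^2 + P) * trm v q ((q:ℂ)*w) n + (q:ℂ)^2 * trm v q w n) := by
    rw [jv_eq, jv_eq, jv_eq, ← tsum_mul_left, ← tsum_mul_left, ← tsum_mul_left,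
      ← Summable.tsum_sub (S1.mul_left P) (S2.mul_left _), ← Summable.tsum_add ((S1.mul_left P).sub (S2.mul_left _)) (S3.mul_left _)]
  rw [e1, Summable.tsum_eq_zero_add hg]
  have h0 : P * trm v q ((q:ℂ)^2*w) 0 - ((q:ℂ)^2 + P) * trm v q ((q:ℂ)*w) 0
      + (q:ℂ)^2 * trm v q w 0 = 0 := by
    rw [trm_zero, trm_zero, trm_zero]; ring
  rw [h0, zero_add]
  have h1 : ∀ n : ℕ, P * trm v q ((q:ℂ)^2*w) (n+1) - ((q:ℂ)^2 + P) * trm v q ((q:ℂ)*w) (n+1)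
      + (q:ℂ)^2 * trm v q w (n+1) = -(q:ℂ)^4 * w^2 * trm v q ((q:ℂ)*w) n := fun n =>
    trm_star hq0 hq1 hv w n
  rw [tsum_congr h1, tsum_mul_left, jv_eq]

include hq0 hq1 hv in
lemma jv_R1 (w : ℂ) :
    jv v q ((q:ℂ)*w) - jv v q w
      = (q:ℂ)^2 * w^2 / (1 - ((q ^ (2*v+2:ℝ) : ℝ):ℂ)) * jv (v+1) q ((q:ℂ)*w) := by
  have hv' : (-1:ℝ) < v + 1 := by linarith
  have S2 := summable_trm hq0 hq1 hv ((q:ℂ) * w)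
  have S3 := summable_trm hq0 hq1 hv w
  have hg : Summable (fun n => trm v q ((q:ℂ)*w) n - trm v q w n) := S2.sub S3
  rw [jv_eq, jv_eq, ← Summable.tsum_sub S2 S3, Summable.tsum_eq_zero_add hg]
  rw [show trm v q ((q:ℂ)*w) 0 - trm v q w 0 = 0 by rw [trm_zero, trm_zero]; ring, zero_add]
  rw [tsum_congr (fun n => trm_R1 hq0 hq1 hv w n), tsum_mul_left, jv_eq]

end
end QL
namespace QL
section
variable {v q : ℝ} (hq0 : 0 < q) (hq1 : q < 1) (hv : -1 < v)

set_option maxHeartbeats 1000000 in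
include hq0 hq1 hv in
lemma jv_tail_bound (w0 : ℂ) (hw0 : w0 ≠ 0) :
    ∃ K : ℝ, 0 ≤ K ∧ ∀ w : ℂ, ‖w‖ ≤ ‖w0‖ → ‖jv v q w - 1‖ ≤ K * ‖w‖^2 := by
  have hS0 : Summable (fun n => ‖trm v q w0 (n+1)‖) :=
    (summable_nat_add_iff 1).mpr (summable_norm_trm hq0 hq1 hv w0)
  have hw0p : 0 < ‖w0‖ := norm_pos_iff.mpr hw0
  refine ⟨(∑' n, ‖trm v q w0 (n+1)‖)/‖w0‖^2,
    div_nonneg (tsum_nonneg fun n => norm_nonneg _) (by positivity), ?_⟩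
  intro w hw
  have hSw := summable_trm hq0 hq1 hv w
  have h1 : jv v q w - 1 = ∑' n, trm v q w (n+1) := by
    rw [jv_eq, Summable.tsum_eq_zero_add hSw, trm_zero]; ring
  rw [h1]
  have hnorm : Summable (fun n => ‖trm v q w (n+1)‖) :=
    (summable_nat_add_iff 1).mpr (summable_norm_trm hq0 hq1 hv w)
  refine le_trans (norm_tsum_le_tsum_norm hnorm) ?_
  have hb : ∀ n : ℕ, ‖trm v q w (n+1)‖ ≤ ‖trm v q w0 (n+1)‖/‖w0‖^2 * ‖w‖^2 := by
    intro n
    have hD := den_pos hq0 hq1 hv (v := v) (n+1)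
    rw [norm_trm hq0 hq1 hv, norm_trm hq0 hq1 hv]
    set D : ℝ := qPoch (q ^ 2) (q ^ 2) (n+1) * qPoch (q ^ (2 * v + 2 : ℝ)) (q ^ 2) (n+1) with hDdef
    have e : ‖w‖^(2*(n+1)) = ‖w‖^(2*n)*‖w‖^2 := by ring
    have e0 : ‖w0‖^(2*(n+1)) = ‖w0‖^(2*n)*‖w0‖^2 := by ring
    rw [e, e0]
    rw [div_div, div_mul_eq_mul_div, div_le_div_iff₀ (by positivity) (by positivity)]
    have hh := pow_le_pow_left₀ (norm_nonneg w) hw (2*n)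
    nlinarith [mul_le_mul_of_nonneg_left hh
      (by positivity : (0:ℝ) ≤ q^((n+1)*(n+1+1)) * D * ‖w‖^2 * ‖w0‖^2)]
  calc ∑' n, ‖trm v q w (n+1)‖
      ≤ ∑' n, (‖trm v q w0 (n+1)‖/‖w0‖^2 * ‖w‖^2) :=
        Summable.tsum_le_tsum hb hnorm ((hS0.div_const _).mul_right _)
    _ = (∑' n, ‖trm v q w0 (n+1)‖)/‖w0‖^2 * ‖w‖^2 := by
        rw [tsum_mul_right, tsum_div_const]

end
end QL

open QL Filter in
set_option maxHeartbeats 1000000 in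
/-- the q-Lommel type integral (Koornwinder–Swarttouw). -/
theorem q_lommel_integral (q v a : ℝ) (hq0 : 0 < q) (hq1 : q < 1) (hv : -1 < v)
    (ha : 0 < a) (y z : ℂ) (hy : y ≠ 0) (hz : z ≠ 0) (hyz : y ^ 2 ≠ z ^ 2) :
    qIntC0 q a (fun t => jv v q (y * t) * jv v q (z * t) * ((t ^ (2 * v + 1 : ℝ) : ℝ) : ℂ)) =
      (((1 - q) / (1 - q ^ (2 * v + 2 : ℝ)) * a ^ (2 * v + 2 : ℝ) : ℝ) : ℂ) *
        ((y ^ 2 * jv (v + 1) q ((a : ℂ) * y) * jv v q (((a / q : ℝ) : ℂ) * z) -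
          z ^ 2 * jv (v + 1) q ((a : ℂ) * z) * jv v q (((a / q : ℝ) : ℂ) * y)) /
          (y ^ 2 - z ^ 2)) := by
  have hq : (q:ℂ) ≠ 0 := Complex.ofReal_ne_zero.mpr hq0.ne'
  have ha0 : (a:ℂ) ≠ 0 := Complex.ofReal_ne_zero.mpr ha.ne'
  have hyz' : y^2 - z^2 ≠ 0 := sub_ne_zero.mpr hyz
  set b : ℂ := ((a/q : ℝ) : ℂ) with hbdef
  have hab : b * (q:ℂ) = (a:ℂ) := by rw [hbdef]; push_cast; field_simp
  have hb0 : b ≠ 0 := by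
    rw [hbdef]; exact Complex.ofReal_ne_zero.mpr (by positivity : (0:ℝ) < a/q).ne'
  set P : ℝ := q ^ (2*v+2:ℝ) with hPdef
  have hP0 : 0 < P := hp0 hq0
  have hP1 : P < 1 := hp1 hq0 hq1 hv
  have h1P : (1:ℂ) - (P:ℂ) ≠ 0 := by
    intro h
    have : (1:ℝ) - P = 0 := by exact_mod_cast h
    linarith
  set U : ℕ → ℂ := fun m => jv v q (y * b * (q:ℂ)^m) with hUdef
  set V : ℕ → ℂ := fun m => jv v q (z * b * (q:ℂ)^m) with hVdef
  set W : ℕ → ℂ := fun m => U (m+1) * V m - U m * V (m+1) with hWdef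
  have EqU : ∀ m, (P:ℂ) * U (m+2) - ((q:ℂ)^2 + (P:ℂ)) * U (m+1) + (q:ℂ)^2 * U m
      = -(q:ℂ)^4 * (y*b*(q:ℂ)^m)^2 * U (m+1) := by
    intro m
    have h := jv_star hq0 hq1 hv (y*b*(q:ℂ)^m)
    rw [show (q:ℂ)^2 * (y*b*(q:ℂ)^m) = y*b*(q:ℂ)^(m+2) by ring,
      show (q:ℂ) * (y*b*(q:ℂ)^m) = y*b*(q:ℂ)^(m+1) by ring] at h
    exact h
  have EqV : ∀ m, (P:ℂ) * V (m+2) - ((q:ℂ)^2 + (P:ℂ)) * V (m+1) + (q:ℂ)^2 * V m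
      = -(q:ℂ)^4 * (z*b*(q:ℂ)^m)^2 * V (m+1) := by
    intro m
    have h := jv_star hq0 hq1 hv (z*b*(q:ℂ)^m)
    rw [show (q:ℂ)^2 * (z*b*(q:ℂ)^m) = z*b*(q:ℂ)^(m+2) by ring,
      show (q:ℂ) * (z*b*(q:ℂ)^m) = z*b*(q:ℂ)^(m+1) by ring] at h
    exact h
  have rel : ∀ m, (P:ℂ) * W (m+1) - (q:ℂ)^2 * W m
      + (q:ℂ)^(2*m+4) * b^2 * (y^2 - z^2) * (U (m+1) * V (m+1)) = 0 := by
    intro m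
    have e1 := EqU m
    have e2 := EqV m
    simp only [hWdef]
    linear_combination (V (m+1)) * e1 - (U (m+1)) * e2
  set G : ℕ → ℂ := fun m => (P:ℂ)^m * W m / (q:ℂ)^(2*m) with hGdef
  set s : ℕ → ℂ := fun m => (P:ℂ)^m * (U (m+1) * V (m+1)) with hsdef
  have key : ∀ m, b^2*(q:ℂ)^2*(y^2-z^2) * s m = G m - G (m+1) := by
    intro m
    simp only [hGdef, hsdef]
    have hcm : (q:ℂ)^(2*m) ≠ 0 := pow_ne_zero _ hq
    have hcm2 : (q:ℂ)^(2*(m+1)) ≠ 0 := pow_ne_zero _ hq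
    field_simp
    linear_combination ((P:ℂ)^m * (q:ℂ)^(2*m)) * rel m
  -- bounds
  obtain ⟨KU, hKU0, hKU⟩ := jv_tail_bound hq0 hq1 hv (y*b) (mul_ne_zero hy hb0)
  obtain ⟨KV, hKV0, hKV⟩ := jv_tail_bound hq0 hq1 hv (z*b) (mul_ne_zero hz hb0)
  have hqc : ‖(q:ℂ)‖ = q := by
    rw [Complex.norm_real, Real.norm_eq_abs, abs_of_pos hq0]
  have hcnorm : ∀ m:ℕ, ‖(q:ℂ)^m‖ = q^m := by
    intro m; rw [norm_pow, hqc]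
  have hcle1 : ∀ m:ℕ, ‖(q:ℂ)^m‖ ≤ 1 := by
    intro m; rw [hcnorm]; exact pow_le_one₀ hq0.le hq1.le
  have hargU : ∀ m:ℕ, ‖y*b*(q:ℂ)^m‖ ≤ ‖y*b‖ := by
    intro m
    rw [norm_mul]
    nlinarith [hcle1 m, norm_nonneg (y*b), norm_nonneg ((q:ℂ)^m)]
  have hargV : ∀ m:ℕ, ‖z*b*(q:ℂ)^m‖ ≤ ‖z*b‖ := by
    intro m
    rw [norm_mul]
    nlinarith [hcle1 m, norm_nonneg (z*b), norm_nonneg ((q:ℂ)^m)]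
  have hargU2 : ∀ m:ℕ, ‖y*b*(q:ℂ)^m‖^2 = ‖y*b‖^2 * (q^2)^m := by
    intro m
    rw [norm_mul, hcnorm, mul_pow, pow_right_comm]
  have hargV2 : ∀ m:ℕ, ‖z*b*(q:ℂ)^m‖^2 = ‖z*b‖^2 * (q^2)^m := by
    intro m
    rw [norm_mul, hcnorm, mul_pow, pow_right_comm]
  have hUdiff : ∀ m:ℕ, ‖U m - 1‖ ≤ KU * ‖y*b‖^2 * (q^2)^m := by
    intro m
    calc ‖U m - 1‖ ≤ KU * ‖y*b*(q:ℂ)^m‖^2 := hKU _ (hargU m)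
    _ ≤ KU * (‖y*b‖^2 * (q^2)^m) := by
        have := hargU2 m; nlinarith
    _ = KU * ‖y*b‖^2 * (q^2)^m := by ring
  have hVdiff : ∀ m:ℕ, ‖V m - 1‖ ≤ KV * ‖z*b‖^2 * (q^2)^m := by
    intro m
    calc ‖V m - 1‖ ≤ KV * ‖z*b*(q:ℂ)^m‖^2 := hKV _ (hargV m)
    _ ≤ KV * (‖z*b‖^2 * (q^2)^m) := by
        have := hargV2 m; nlinarith
    _ = KV * ‖z*b‖^2 * (q^2)^m := by ring
  set CU : ℝ := 1 + KU * ‖y*b‖^2 with hCUdef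
  set CV : ℝ := 1 + KV * ‖z*b‖^2 with hCVdef
  have hUb : ∀ m, ‖U m‖ ≤ CU := by
    intro m
    have h1 : ‖U m‖ ≤ 1 + ‖U m - 1‖ := by
      calc ‖U m‖ = ‖1 + (U m - 1)‖ := by ring_nf
      _ ≤ ‖(1:ℂ)‖ + ‖U m - 1‖ := norm_add_le _ _
      _ = 1 + ‖U m - 1‖ := by rw [norm_one]
    have h2 := hUdiff m
    have h3 : (q^2)^m ≤ 1 := pow_le_one₀ (by positivity) (by nlinarith)
    have h4 : 0 ≤ KU * ‖y*b‖^2 := by positivity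
    rw [hCUdef]
    nlinarith
  have hVb : ∀ m, ‖V m‖ ≤ CV := by
    intro m
    have h1 : ‖V m‖ ≤ 1 + ‖V m - 1‖ := by
      calc ‖V m‖ = ‖1 + (V m - 1)‖ := by ring_nf
      _ ≤ ‖(1:ℂ)‖ + ‖V m - 1‖ := norm_add_le _ _
      _ = 1 + ‖V m - 1‖ := by rw [norm_one]
    have h2 := hVdiff m
    have h3 : (q^2)^m ≤ 1 := pow_le_one₀ (by positivity) (by nlinarith)
    have h4 : 0 ≤ KV * ‖z*b‖^2 := by positivity
    rw [hCVdef]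
    nlinarith
  have hCU0 : 0 ≤ CU := le_trans (norm_nonneg _) (hUb 0)
  have hCV0 : 0 ≤ CV := le_trans (norm_nonneg _) (hVb 0)
  -- bound on W
  set CW : ℝ := CU * (KV * ‖z*b‖^2 * (1 + q^2)) + CV * (KU * ‖y*b‖^2 * (1 + q^2)) with hCWdef
  have hWb : ∀ m, ‖W m‖ ≤ CW * (q^2)^m := by
    intro m
    have hWrw : W m = U (m+1) * (V m - V (m+1)) + V (m+1) * (U (m+1) - U m) := by
      simp only [hWdef]; ring
    have hVd : ‖V m - V (m+1)‖ ≤ KV * ‖z*b‖^2 * (1 + q^2) * (q^2)^m := by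
      calc ‖V m - V (m+1)‖ = ‖(V m - 1) - (V (m+1) - 1)‖ := by ring_nf
      _ ≤ ‖V m - 1‖ + ‖V (m+1) - 1‖ := norm_sub_le _ _
      _ ≤ KV * ‖z*b‖^2 * (q^2)^m + KV * ‖z*b‖^2 * (q^2)^(m+1) := add_le_add (hVdiff m) (hVdiff (m+1))
      _ = KV * ‖z*b‖^2 * (1 + q^2) * (q^2)^m := by rw [pow_succ]; ring
    have hUd : ‖U (m+1) - U m‖ ≤ KU * ‖y*b‖^2 * (1 + q^2) * (q^2)^m := by
      calc ‖U (m+1) - U m‖ = ‖(U (m+1) - 1) - (U m - 1)‖ := by ring_nf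
      _ ≤ ‖U (m+1) - 1‖ + ‖U m - 1‖ := norm_sub_le _ _
      _ ≤ KU * ‖y*b‖^2 * (q^2)^(m+1) + KU * ‖y*b‖^2 * (q^2)^m := add_le_add (hUdiff (m+1)) (hUdiff m)
      _ = KU * ‖y*b‖^2 * (1 + q^2) * (q^2)^m := by rw [pow_succ]; ring
    calc ‖W m‖ ≤ ‖U (m+1) * (V m - V (m+1))‖ + ‖V (m+1) * (U (m+1) - U m)‖ := by rw [hWrw]; exact norm_add_le _ _
    _ = ‖U (m+1)‖ * ‖V m - V (m+1)‖ + ‖V (m+1)‖ * ‖U (m+1) - U m‖ := by rw [norm_mul, norm_mul]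
    _ ≤ CU * (KV * ‖z*b‖^2 * (1 + q^2) * (q^2)^m) + CV * (KU * ‖y*b‖^2 * (1 + q^2) * (q^2)^m) := by
        apply add_le_add
        · exact mul_le_mul (hUb _) hVd (norm_nonneg _) hCU0
        · exact mul_le_mul (hVb _) hUd (norm_nonneg _) hCV0
    _ = CW * (q^2)^m := by rw [hCWdef]; ring
  have hCW0 : 0 ≤ CW := by
    have := hWb 0
    have h0 := norm_nonneg (W 0)
    simpa using le_trans h0 this
  -- limit of G
  have hGlim : Filter.Tendsto G Filter.atTop (nhds 0) := by
    apply squeeze_zero_norm (a := fun m => CW * P^m)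
    · intro m
      have hGnorm : ‖G m‖ = P^m * ‖W m‖ / q^(2*m) := by
        simp only [hGdef]
        rw [norm_div, norm_mul, norm_pow, norm_pow, hqc, Complex.norm_real,
          Real.norm_eq_abs, abs_of_pos hP0]
      rw [hGnorm]
      rw [div_le_iff₀ (by positivity)]
      have h1 := hWb m
      have h2 : (q^2)^m = q^(2*m) := by rw [← pow_mul]
      have hPm : (0:ℝ) ≤ P^m := by positivity
      calc P^m * ‖W m‖ ≤ P^m * (CW * (q^2)^m) := mul_le_mul_of_nonneg_left h1 hPm
      _ = CW * P^m * q^(2*m) := by rw [h2]; ring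
    · rw [show (0:ℝ) = CW * 0 by ring]
      exact (tendsto_pow_atTop_nhds_zero_of_lt_one hP0.le hP1).const_mul CW
  -- summability of s
  have hsummable : Summable s := by
    apply Summable.of_norm_bounded (g := fun m => (CU*CV) * P^m)
      ((summable_geometric_of_lt_one hP0.le hP1).mul_left _)
    intro m
    simp only [hsdef]
    rw [norm_mul, norm_mul, norm_pow, Complex.norm_real, Real.norm_eq_abs, abs_of_pos hP0]
    have h1 : ‖U (m+1)‖ * ‖V (m+1)‖ ≤ CU * CV :=
      mul_le_mul (hUb _) (hVb _) (norm_nonneg _) hCU0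
    have hPm : (0:ℝ) ≤ P^m := by positivity
    nlinarith [norm_nonneg (U (m+1)), norm_nonneg (V (m+1))]
  -- telescoping
  have htel : ∀ n:ℕ, ∑ i ∈ Finset.range n, (b^2*(q:ℂ)^2*(y^2-z^2) * s i) = G 0 - G n := by
    intro n
    rw [show ∑ i ∈ Finset.range n, (b^2*(q:ℂ)^2*(y^2-z^2) * s i)
        = ∑ i ∈ Finset.range n, (G i - G (i+1)) from Finset.sum_congr rfl fun i _ => key i,
      Finset.sum_range_sub' G n]
  have hGsum : b^2*(q:ℂ)^2*(y^2-z^2) * (∑' m, s m) = G 0 := by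
    have h1 : Filter.Tendsto (fun n => ∑ i ∈ Finset.range n, (b^2*(q:ℂ)^2*(y^2-z^2) * s i))
        Filter.atTop (nhds (b^2*(q:ℂ)^2*(y^2-z^2) * ∑' m, s m)) :=
      ((hsummable.hasSum.mul_left _)).tendsto_sum_nat
    have h2 : Filter.Tendsto (fun n => ∑ i ∈ Finset.range n, (b^2*(q:ℂ)^2*(y^2-z^2) * s i))
        Filter.atTop (nhds (G 0)) := by
      simp only [htel]
      have := tendsto_const_nhds (x := G 0) (f := Filter.atTop (α := ℕ)) |>.sub hGlim
      simpa using this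
    exact tendsto_nhds_unique h1 h2
  -- integral side
  have hterm : ∀ n:ℕ, ((q^n : ℝ):ℂ) * (jv v q (y * ((a * q^n : ℝ):ℂ)) * jv v q (z * ((a * q^n : ℝ):ℂ)) *
      (((a*q^n) ^ (2*v+1:ℝ) : ℝ) : ℂ)) = ((a ^ (2*v+1:ℝ) : ℝ):ℂ) * s n := by
    intro n
    have harg : ((a * q^n : ℝ) : ℂ) = b * (q:ℂ)^(n+1) := by
      push_cast
      rw [← hab]
      ring
    have hUn : jv v q (y * ((a * q^n : ℝ):ℂ)) = U (n+1) := by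
      rw [harg, show y * (b * (q:ℂ)^(n+1)) = y*b*(q:ℂ)^(n+1) from by ring]
    have hVn : jv v q (z * ((a * q^n : ℝ):ℂ)) = V (n+1) := by
      rw [harg, show z * (b * (q:ℂ)^(n+1)) = z*b*(q:ℂ)^(n+1) from by ring]
    have hreal : q^n * (a*q^n) ^ (2*v+1:ℝ) = a ^ (2*v+1:ℝ) * P^n := by
      rw [Real.mul_rpow ha.le (by positivity)]
      rw [← Real.rpow_natCast q n]
      rw [← Real.rpow_mul hq0.le]
      rw [show q^((n:ℝ)) * (a^(2*v+1:ℝ) * q^((n:ℝ)*(2*v+1))) =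
        a^(2*v+1:ℝ) * (q^((n:ℝ)) * q^((n:ℝ)*(2*v+1))) from by ring]
      rw [← Real.rpow_add hq0]
      rw [show (n:ℝ) + (n:ℝ)*(2*v+1) = (2*v+2)*(n:ℝ) from by ring]
      rw [Real.rpow_mul hq0.le, Real.rpow_natCast, hPdef]
    calc ((q^n : ℝ):ℂ) * (jv v q (y * ((a * q^n : ℝ):ℂ)) * jv v q (z * ((a * q^n : ℝ):ℂ)) *
        (((a*q^n) ^ (2*v+1:ℝ) : ℝ) : ℂ))
        = ((q^n * ((a*q^n) ^ (2*v+1:ℝ)) : ℝ):ℂ) * (U (n+1) * V (n+1)) := by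
          rw [hUn, hVn]; push_cast; ring
      _ = ((a ^ (2*v+1:ℝ) : ℝ):ℂ) * s n := by
          rw [hreal, hsdef]; push_cast; ring
  have hint : qIntC0 q a (fun t => jv v q (y * t) * jv v q (z * t) * ((t ^ (2 * v + 1 : ℝ) : ℝ) : ℂ))
      = (((1 - q) * a : ℝ):ℂ) * (((a ^ (2*v+1:ℝ) : ℝ):ℂ) * ∑' n, s n) := by
    rw [qIntC0, tsum_congr hterm, tsum_mul_left]
  rw [hint]
  -- value of the sum
  have hcoef : b^2*(q:ℂ)^2*(y^2-z^2) ≠ 0 :=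
    mul_ne_zero (mul_ne_zero (pow_ne_zero 2 hb0) (pow_ne_zero 2 hq)) hyz'
  have hsum_val : (∑' m, s m) = G 0 / (b^2*(q:ℂ)^2*(y^2-z^2)) := by
    rw [eq_div_iff hcoef, ← hGsum]; ring
  rw [hsum_val]
  have hG0 : G 0 = W 0 := by simp [hGdef]
  -- R1 relations
  have hU10 : U 1 - U 0 = (a:ℂ)^2*y^2/(1-(P:ℂ)) * jv (v+1) q ((a:ℂ)*y) := by
    have h := jv_R1 hq0 hq1 hv (y*b)
    rw [show (q:ℂ)*(y*b) = (a:ℂ)*y from by rw [← hab]; ring,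
      show (q:ℂ)^2*(y*b)^2 = (a:ℂ)^2*y^2 from by rw [← hab]; ring] at h
    have e0 : U 0 = jv v q (y*b) := by
      simp only [hUdef]; rw [pow_zero, mul_one]
    have e1 : U 1 = jv v q ((a:ℂ)*y) := by
      simp only [hUdef]; rw [pow_one]; congr 1; rw [← hab]; ring
    rw [e0, e1, h]
  have hV10 : V 1 - V 0 = (a:ℂ)^2*z^2/(1-(P:ℂ)) * jv (v+1) q ((a:ℂ)*z) := by
    have h := jv_R1 hq0 hq1 hv (z*b)
    rw [show (q:ℂ)*(z*b) = (a:ℂ)*z from by rw [← hab]; ring,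
      show (q:ℂ)^2*(z*b)^2 = (a:ℂ)^2*z^2 from by rw [← hab]; ring] at h
    have e0 : V 0 = jv v q (z*b) := by
      simp only [hVdef]; rw [pow_zero, mul_one]
    have e1 : V 1 = jv v q ((a:ℂ)*z) := by
      simp only [hVdef]; rw [pow_one]; congr 1; rw [← hab]; ring
    rw [e0, e1, h]
  have eU0 : U 0 = jv v q (b*y) := by
    simp only [hUdef]; rw [pow_zero, mul_one, mul_comm y b]
  have eV0 : V 0 = jv v q (b*z) := by
    simp only [hVdef]; rw [pow_zero, mul_one, mul_comm z b]
  have hW0 : W 0 = (a:ℂ)^2/(1-(P:ℂ)) *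
      (y^2 * jv (v+1) q ((a:ℂ)*y) * jv v q (b*z) - z^2 * jv (v+1) q ((a:ℂ)*z) * jv v q (b*y)) := by
    have h1 := hU10
    have h2 := hV10
    rw [eU0] at h1
    rw [eV0] at h2
    simp only [hWdef]
    rw [eU0, eV0]
    linear_combination (jv v q (b*z)) * h1 - (jv v q (b*y)) * h2
  rw [hG0, hW0]
  -- final algebra
  have hconst : (1-q)*a * a^(2*v+1:ℝ) = (1-q) * a^(2*v+2:ℝ) := by
    have h2 := Real.rpow_add ha 1 (2*v+1)
    rw [Real.rpow_one] at h2
    rw [show (2*v+2:ℝ) = 1 + (2*v+1) from by ring, h2]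
    ring
  have hcast : (((1-q)*a : ℝ):ℂ) * ((a^(2*v+1:ℝ) : ℝ):ℂ) = ((1 - q : ℝ):ℂ) * ((a^(2*v+2:ℝ) : ℝ):ℂ) := by
    rw [← Complex.ofReal_mul, hconst]
    push_cast
    ring
  have hb2q2 : b^2*(q:ℂ)^2 = (a:ℂ)^2 := by rw [← hab]; ring
  rw [← mul_assoc, hcast, hb2q2]
  push_cast
  field_simp
end

section
/- The integral operator T_a^v on L^2_{q,v,a} is injective: if T_a^v \psi = 0 on [0,a]_q, then \psi = 0 on [0,a]_q. Consequently 0 is not an eigenvalue of T_a^v. -/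
open Filter

lemma tprod_one_sub_pos {c r : ℝ} (hc0 : 0 ≤ c) (hc1 : c < 1) (hr0 : 0 < r) (hr1 : r < 1) :
    0 < qPochInf c r := by
  have h1c : (0:ℝ) < 1 - c := by linarith
  set K : ℝ := 1 / (1 - c) with hK
  have hK1 : K * (1 - c) = 1 := by rw [hK]; field_simp
  have hKpos : 0 < K := by positivity
  set δ : ℝ := Real.exp (-(K * c * (1 - r)⁻¹)) with hδ
  have hfactor : ∀ i : ℕ, Real.exp (-(K * (c * r ^ i))) ≤ 1 - c * r ^ i := by
    intro i
    set x : ℝ := c * r ^ i with hx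
    have hx0 : 0 ≤ x := by positivity
    have hxc : x ≤ c := by
      have : r ^ i ≤ 1 := pow_le_one₀ hr0.le hr1.le
      nlinarith
    have h1 : 1 + K * x ≤ Real.exp (K * x) := by
      have := Real.add_one_le_exp (K * x); linarith
    have h2 : Real.exp (-(K * x)) = (Real.exp (K * x))⁻¹ := by
      rw [Real.exp_neg]
    rw [h2]
    have hKx : 0 < 1 + K * x := by positivity
    have h3 : (Real.exp (K * x))⁻¹ ≤ (1 + K * x)⁻¹ := by
      apply inv_anti₀ hKx
      linarith [Real.add_one_le_exp (K * x)]
    refine h3.trans ?_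
    rw [inv_le_iff_one_le_mul₀ hKx]
    have h5 : 1 ≤ K * (1 - x) := by nlinarith
    have h6 : 0 ≤ x * (K * (1 - x) - 1) := mul_nonneg hx0 (by linarith)
    nlinarith [h6]
  have hlow : ∀ F : Finset ℕ, δ ≤ ∏ i ∈ F, (1 - c * r ^ i) := by
    intro F
    have hsum : ∑ i ∈ F, r ^ i ≤ (1 - r)⁻¹ := by
      have := Summable.sum_le_tsum F (fun i _ => by positivity)
        (summable_geometric_of_lt_one hr0.le hr1)
      rwa [tsum_geometric_of_lt_one hr0.le hr1] at this
    calc δ ≤ Real.exp (-(K * c * ∑ i ∈ F, r ^ i)) := by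
            apply Real.exp_le_exp.mpr
            have : K * c * ∑ i ∈ F, r ^ i ≤ K * c * (1 - r)⁻¹ :=
              mul_le_mul_of_nonneg_left hsum (by positivity)
            linarith
      _ = ∏ i ∈ F, Real.exp (-(K * (c * r ^ i))) := by
            rw [← Real.exp_sum]
            congr 1
            rw [Finset.mul_sum, ← Finset.sum_neg_distrib]
            exact Finset.sum_congr rfl fun i _ => by ring
      _ ≤ ∏ i ∈ F, (1 - c * r ^ i) := by
            apply Finset.prod_le_prod (fun i _ => (Real.exp_pos _).le)
              (fun i _ => hfactor i)
  have hmono : Antitone (fun F : Finset ℕ => ∏ i ∈ F, (1 - c * r ^ i)) := by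
    intro F F' h
    simp only
    rw [← Finset.prod_sdiff h]
    have h1 : ∏ i ∈ F' \ F, (1 - c * r ^ i) ≤ 1 :=
      Finset.prod_le_one (fun i _ => by nlinarith [pow_le_one₀ hr0.le hr1.le (n := i), pow_nonneg hr0.le i])
        (fun i _ => by nlinarith [pow_nonneg hr0.le i, pow_le_one₀ hr0.le hr1.le (n := i)])
    have h2 : (0:ℝ) ≤ ∏ i ∈ F, (1 - c * r ^ i) :=
      Finset.prod_nonneg (fun i _ => by nlinarith [pow_le_one₀ hr0.le hr1.le (n := i), pow_nonneg hr0.le i])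
    nlinarith
  have hbdd : BddBelow (Set.range fun F : Finset ℕ => ∏ i ∈ F, (1 - c * r ^ i)) := by
    refine ⟨δ, ?_⟩
    rintro _ ⟨F, rfl⟩
    exact hlow F
  have hprod : HasProd (fun i : ℕ => 1 - c * r ^ i)
      (⨅ F : Finset ℕ, ∏ i ∈ F, (1 - c * r ^ i)) :=
    tendsto_atTop_ciInf hmono hbdd
  rw [qPochInf, hprod.tprod_eq]
  exact lt_of_lt_of_le (Real.exp_pos _) (le_ciInf hlow)

lemma lemA {c : ℕ → ℝ} {C τ : ℝ} (hτ : 0 ≤ τ)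
    (hb : ∀ k, |c k| ≤ C * τ ^ k)
    {x : ℕ → ℝ} (hx0 : ∀ᶠ s in atTop, x s ≠ 0)
    (hxt : Tendsto x atTop (nhds (0:ℝ)))
    (hz : ∀ᶠ s in atTop, ∑' k, c k * x s ^ k = 0) :
    ∀ k, c k = 0 := by
  have hC : 0 ≤ C := by
    have := (abs_nonneg (c 0)).trans (hb 0); simpa using this
  suffices H : ∀ m, (∀ k, k < m → c k = 0) → c m = 0 by
    intro m
    induction m using Nat.strong_induction_on with
    | _ m ih => exact H m ih
  intro m ih
  have habs : Tendsto (fun s => |x s|) atTop (nhds 0) := by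
    simpa using hxt.abs
  have hev : ∀ᶠ s in atTop, |c m| ≤ (2 * C * τ ^ (m + 1)) * |x s| := by
    have h1 : ∀ᶠ s in atTop, |x s| < min 1 (1 / (2 * (τ + 1))) :=
      habs.eventually_lt_const (by positivity)
    filter_upwards [h1, hx0, hz] with s hs hxs hzs
    set y := x s with hy
    have hy1 : |y| ≤ 1 := le_of_lt (lt_of_lt_of_le hs (min_le_left _ _))
    have hy2 : τ * |y| ≤ 1 / 2 := by
      have h' : |y| < 1 / (2 * (τ + 1)) := lt_of_lt_of_le hs (min_le_right _ _)
      have hτ1 : (0:ℝ) < 2 * (τ + 1) := by linarith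
      rw [lt_div_iff₀ hτ1] at h'
      nlinarith [abs_nonneg y]
    have hτy : τ * |y| < 1 := lt_of_le_of_lt hy2 (by norm_num)
    have hτy0 : 0 ≤ τ * |y| := by positivity
    have hgeom : Summable (fun j : ℕ => (τ * |y|) ^ j) :=
      summable_geometric_of_lt_one hτy0 hτy
    have hbound : ∀ p j : ℕ, ‖c (j + p) * y ^ j‖ ≤ (C * τ ^ p) * (τ * |y|) ^ j := by
      intro p j
      have : ‖c (j + p) * y ^ j‖ = |c (j + p)| * |y| ^ j := by
        rw [norm_mul, norm_pow, Real.norm_eq_abs, Real.norm_eq_abs]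
      rw [this]
      calc |c (j + p)| * |y| ^ j ≤ (C * τ ^ (j + p)) * |y| ^ j :=
            mul_le_mul_of_nonneg_right (hb _) (by positivity)
        _ = (C * τ ^ p) * (τ * |y|) ^ j := by rw [pow_add, mul_pow]; ring
    have hsum : ∀ p : ℕ, Summable (fun j => c (j + p) * y ^ j) := by
      intro p
      exact Summable.of_norm_bounded (hgeom.mul_left (C * τ ^ p)) (hbound p)
    have hsum0 : Summable (fun k => c k * y ^ k) := by
      have := hsum 0
      simpa using this
    have hsplit0 : ∑ k ∈ Finset.range m, (c k * y ^ k) + ∑' j, c (j + m) * y ^ (j + m)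
        = ∑' k, c k * y ^ k := Summable.sum_add_tsum_nat_add m hsum0
    have hfin : ∑ k ∈ Finset.range m, (c k * y ^ k) = 0 :=
      Finset.sum_eq_zero fun k hk => by rw [ih k (Finset.mem_range.mp hk)]; ring
    have h3 : ∑' j, c (j + m) * y ^ (j + m) = y ^ m * ∑' j, c (j + m) * y ^ j := by
      rw [← tsum_mul_left]
      exact tsum_congr fun j => by rw [pow_add]; ring
    have h4 : ∑' j, c (j + m) * y ^ j = 0 := by
      have h40 : y ^ m * (∑' j, c (j + m) * y ^ j) = 0 := by
        rw [← h3]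
        have := hsplit0
        rw [hzs] at this
        linarith [this, hfin]
      rcases mul_eq_zero.mp h40 with h | h
      · exact absurd h (pow_ne_zero m hxs)
      · exact h
    have h5 : ∑' j, c (j + m) * y ^ j = c m + y * ∑' j, c (j + (m + 1)) * y ^ j := by
      rw [Summable.tsum_eq_zero_add (hsum m)]
      congr 1
      · simp
      · rw [← tsum_mul_left]
        exact tsum_congr fun j => by
          rw [show j + 1 + m = j + (m + 1) from by omega, pow_succ]; ring
    have hnormsum : Summable (fun j => ‖c (j + (m + 1)) * y ^ j‖) :=
      Summable.of_nonneg_of_le (fun j => norm_nonneg _) (hbound (m + 1))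
        (hgeom.mul_left (C * τ ^ (m + 1)))
    have h7 : |∑' j, c (j + (m + 1)) * y ^ j| ≤ 2 * (C * τ ^ (m + 1)) := by
      calc |∑' j, c (j + (m + 1)) * y ^ j| ≤ ∑' j, ‖c (j + (m + 1)) * y ^ j‖ := by
            simpa using norm_tsum_le_tsum_norm hnormsum
        _ ≤ ∑' j, (C * τ ^ (m + 1)) * (τ * |y|) ^ j :=
            Summable.tsum_le_tsum (hbound (m + 1)) hnormsum (hgeom.mul_left _)
        _ = (C * τ ^ (m + 1)) * (1 - τ * |y|)⁻¹ := by
            rw [tsum_mul_left, tsum_geometric_of_lt_one hτy0 hτy]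
        _ ≤ 2 * (C * τ ^ (m + 1)) := by
            have h8 : (1 - τ * |y|)⁻¹ ≤ 2 := by
              rw [inv_le_iff_one_le_mul₀ (by linarith)]
              linarith
            have h9 : 0 ≤ C * τ ^ (m + 1) := by positivity
            nlinarith
    have h6 : |c m| = |y| * |∑' j, c (j + (m + 1)) * y ^ j| := by
      have : c m = -(y * ∑' j, c (j + (m + 1)) * y ^ j) := by
        rw [h5] at h4; linarith
      rw [this, abs_neg, abs_mul]
    rw [h6]
    calc |y| * |∑' j, c (j + (m + 1)) * y ^ j| ≤ |y| * (2 * (C * τ ^ (m + 1))) :=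
          mul_le_mul_of_nonneg_left h7 (abs_nonneg _)
      _ = 2 * C * τ ^ (m + 1) * |x s| := by rw [← hy]; ring
  have h8 : Tendsto (fun s => (2 * C * τ ^ (m + 1)) * |x s|) atTop (nhds 0) := by
    have := habs.const_mul (2 * C * τ ^ (m + 1))
    simpa using this
  have h9 : |c m| ≤ 0 := ge_of_tendsto h8 hev
  exact abs_eq_zero.mp (le_antisymm h9 (abs_nonneg _))

set_option maxHeartbeats 2000000 in
/-- `T_a^v` is injective, so 0 is not an eigenvalue. -/
theorem Tav_injective (q v : ℝ) (hq0 : 0 < q) (hq1 : q < 1) (hv : -1 < v)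
    (n₀ : ℤ) (a : ℝ) (ha : a = (q : ℝ) ^ n₀)
    (ψ : ℝ → ℝ) (hψ : memL2a q v a ψ)
    (h0 : ∀ s : ℕ, Tav q v a ψ (a * q ^ s) = 0) :
    ∀ s : ℕ, ψ (a * q ^ s) = 0 := by
  have hq2 : (0:ℝ) < 1 - q := by linarith
  have ha0 : 0 < a := ha ▸ zpow_pos hq0 n₀
  set t : ℕ → ℝ := fun n => a * q ^ n with htdef
  have ht : ∀ n, 0 < t n := fun n => mul_pos ha0 (pow_pos hq0 n)
  have hta : ∀ n, t n ≤ a := fun n => by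
    have h1 : q ^ n ≤ 1 := pow_le_one₀ hq0.le hq1.le
    calc t n = a * q ^ n := rfl
      _ ≤ a * 1 := mul_le_mul_of_nonneg_left h1 ha0.le
      _ = a := mul_one a
  have hc₂0 : (0:ℝ) < q ^ (2 * v + 2 : ℝ) := Real.rpow_pos_of_pos hq0 _
  have hc₂1 : q ^ (2 * v + 2 : ℝ) < 1 := Real.rpow_lt_one hq0.le hq1 (by linarith)
  have hq20 : (0:ℝ) < q ^ 2 := pow_pos hq0 2
  have hq21 : q ^ 2 < 1 := by nlinarith
  have hP1 : 0 < qPochInf (q ^ (2 * v + 2 : ℝ)) (q ^ 2) :=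
    tprod_one_sub_pos hc₂0.le hc₂1 hq20 hq21
  have hP2 : 0 < qPochInf (q ^ 2) (q ^ 2) := tprod_one_sub_pos hq20.le hq21 hq20 hq21
  have hcqv : 0 < cqv q v := by
    rw [cqv]
    positivity
  -- g and its geometric bound
  set g : ℕ → ℝ := fun n => q ^ n * ψ (t n) * (t n) ^ (2 * v + 1 : ℝ) with hgdef
  set B : ℝ := ∑' n : ℕ, q ^ n * (ψ (a * q ^ n)) ^ 2 * (a * q ^ n) ^ (2 * v + 1 : ℝ) with hBdef
  have hterm_nonneg : ∀ n : ℕ, 0 ≤ q ^ n * (ψ (a * q ^ n)) ^ 2 * (a * q ^ n) ^ (2 * v + 1 : ℝ) :=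
    fun n => mul_nonneg (mul_nonneg (pow_pos hq0 n).le (sq_nonneg _))
      (Real.rpow_nonneg (ht n).le _)
  have hB0 : 0 ≤ B := tsum_nonneg hterm_nonneg
  have hψb : ∀ n, q ^ n * (ψ (t n)) ^ 2 * (t n) ^ (2 * v + 1 : ℝ) ≤ B :=
    fun n => Summable.le_tsum hψ n (fun i _ => hterm_nonneg i)
  set τ₁ : ℝ := q ^ (v + 1 : ℝ) with hτ₁def
  have hτ₁0 : 0 < τ₁ := Real.rpow_pos_of_pos hq0 _
  have hτ₁1 : τ₁ < 1 := Real.rpow_lt_one hq0.le hq1 (by linarith)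
  set C : ℝ := Real.sqrt (B * a ^ (2 * v + 1 : ℝ)) with hCdef
  have hC0 : 0 ≤ C := Real.sqrt_nonneg _
  have hqnat : ∀ (n : ℕ) (w : ℝ), ((q ^ n : ℝ)) ^ (w : ℝ) = q ^ ((n : ℝ) * w) := by
    intro n w
    rw [← Real.rpow_natCast q n, ← Real.rpow_mul hq0.le]
  have hg : ∀ n, |g n| ≤ C * τ₁ ^ n := by
    intro n
    have e2 : q ^ n * (t n) ^ (2 * v + 1 : ℝ) = a ^ (2 * v + 1 : ℝ) * (τ₁ ^ n) ^ 2 := by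
      have e2a : (t n) ^ (2 * v + 1 : ℝ) = a ^ (2 * v + 1 : ℝ) * ((q ^ n : ℝ)) ^ (2 * v + 1 : ℝ) :=
        Real.mul_rpow ha0.le (pow_pos hq0 n).le
      rw [e2a, hqnat n (2 * v + 1)]
      have e3 : (τ₁ ^ n) ^ 2 = q ^ (((n:ℝ) * (v + 1)) * 2) := by
        rw [hτ₁def, ← Real.rpow_natCast (q ^ (v + 1 : ℝ)) n, ← Real.rpow_mul hq0.le,
          ← Real.rpow_natCast (q ^ ((v + 1 : ℝ) * (n:ℝ))) 2, ← Real.rpow_mul hq0.le]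
        norm_num
        ring_nf
      rw [e3, show (q:ℝ) ^ n = q ^ ((n:ℝ)) from (Real.rpow_natCast q n).symm,
        ← mul_assoc, mul_comm (q ^ ((n:ℝ))) (a ^ (2 * v + 1 : ℝ)), mul_assoc,
        ← Real.rpow_add hq0]
      congr 1
      ring
    have hsq : (g n) ^ 2 ≤ (C * τ₁ ^ n) ^ 2 := by
      have e1 : (g n) ^ 2 = (q ^ n * (ψ (t n)) ^ 2 * (t n) ^ (2 * v + 1 : ℝ)) *
          (q ^ n * (t n) ^ (2 * v + 1 : ℝ)) := by
        simp only [hgdef]; ring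
      have e4 : (C * τ₁ ^ n) ^ 2 = (B * a ^ (2 * v + 1 : ℝ)) * (τ₁ ^ n) ^ 2 := by
        rw [hCdef, mul_pow, Real.sq_sqrt (by positivity)]
      rw [e1, e4]
      have h5 : 0 ≤ q ^ n * (t n) ^ (2 * v + 1 : ℝ) :=
        mul_nonneg (pow_pos hq0 n).le (Real.rpow_nonneg (ht n).le _)
      calc (q ^ n * (ψ (t n)) ^ 2 * (t n) ^ (2 * v + 1 : ℝ)) *
          (q ^ n * (t n) ^ (2 * v + 1 : ℝ))
          ≤ B * (q ^ n * (t n) ^ (2 * v + 1 : ℝ)) :=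
            mul_le_mul_of_nonneg_right (hψb n) h5
        _ = B * (a ^ (2 * v + 1 : ℝ) * (τ₁ ^ n) ^ 2) := by rw [e2]
        _ = B * a ^ (2 * v + 1 : ℝ) * (τ₁ ^ n) ^ 2 := by ring
    calc |g n| = Real.sqrt ((g n) ^ 2) := (Real.sqrt_sq_eq_abs _).symm
      _ ≤ Real.sqrt ((C * τ₁ ^ n) ^ 2) := Real.sqrt_le_sqrt hsq
      _ = C * τ₁ ^ n := Real.sqrt_sq (by positivity)
  -- the coefficients b of jvR and their bound
  set b : ℕ → ℝ := fun k => (-1:ℝ) ^ k * q ^ (k * (k + 1)) /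
    (qPoch (q ^ 2) (q ^ 2) k * qPoch (q ^ (2 * v + 2 : ℝ)) (q ^ 2) k) with hbdef
  have hjvR : ∀ u : ℝ, jvR v q u = ∑' k, b k * u ^ (2 * k) := by
    intro u
    rw [jvR]
    exact tsum_congr fun k => by simp only [hbdef]; ring
  have hpoch : ∀ (c' : ℝ), 0 ≤ c' → c' < 1 → ∀ k, (1 - c') ^ k ≤ qPoch c' (q ^ 2) k := by
    intro c' h0' h1' k
    rw [qPoch]
    calc (1 - c') ^ k = ∏ _i ∈ Finset.range k, (1 - c') := by
          rw [Finset.prod_const, Finset.card_range]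
      _ ≤ ∏ i ∈ Finset.range k, (1 - c' * (q ^ 2) ^ i) := by
          apply Finset.prod_le_prod (fun i _ => by linarith)
          intro i _
          have h2 : c' * (q ^ 2) ^ i ≤ c' := by
            nlinarith [pow_le_one₀ hq20.le hq21.le (n := i), pow_nonneg hq20.le i]
          linarith
  have hpochpos : ∀ (c' : ℝ), 0 ≤ c' → c' < 1 → ∀ k, 0 < qPoch c' (q ^ 2) k :=
    fun c' h0' h1' k => lt_of_lt_of_le (pow_pos (by linarith) k) (hpoch c' h0' h1' k)
  set τ₂ : ℝ := ((1 - q ^ 2) * (1 - q ^ (2 * v + 2 : ℝ)))⁻¹ with hτ₂def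
  have hτ₂0 : 0 < τ₂ := inv_pos.mpr (mul_pos (by linarith) (by linarith))
  have hDpos : ∀ k, 0 < qPoch (q ^ 2) (q ^ 2) k * qPoch (q ^ (2 * v + 2 : ℝ)) (q ^ 2) k :=
    fun k => mul_pos (hpochpos _ hq20.le hq21 k) (hpochpos _ hc₂0.le hc₂1 k)
  have hDk : ∀ k, ((1 - q ^ 2) * (1 - q ^ (2 * v + 2 : ℝ))) ^ k ≤
      qPoch (q ^ 2) (q ^ 2) k * qPoch (q ^ (2 * v + 2 : ℝ)) (q ^ 2) k := by
    intro k
    rw [mul_pow]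
    exact mul_le_mul (hpoch _ hq20.le hq21 k) (hpoch _ hc₂0.le hc₂1 k)
      (pow_nonneg (by linarith) k) (hpochpos _ hq20.le hq21 k).le
  have hbb : ∀ k, |b k| ≤ τ₂ ^ k := by
    intro k
    simp only [hbdef]
    rw [abs_div, abs_of_pos (hDpos k)]
    have hnum : |(-1:ℝ) ^ k * q ^ (k * (k + 1))| = q ^ (k * (k + 1)) := by
      rw [abs_mul, abs_pow, abs_pow, abs_neg, abs_one, one_pow, one_mul, abs_of_pos hq0]
    rw [hnum, hτ₂def, inv_pow, ← one_div]
    exact div_le_div₀ zero_le_one (pow_le_one₀ hq0.le hq1.le) (pow_pos (mul_pos (by linarith) (by linarith)) k) (hDk k)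
  -- M and its bound
  set M : ℕ → ℝ := fun k => ∑' n, g n * (t n) ^ (2 * k) with hMdef
  have hbnd : ∀ k n, ‖g n * (t n) ^ (2 * k)‖ ≤ (C * (a ^ 2) ^ k) * τ₁ ^ n := by
    intro k n
    rw [Real.norm_eq_abs, abs_mul, abs_of_pos (pow_pos (ht n) _)]
    calc |g n| * (t n) ^ (2 * k) ≤ (C * τ₁ ^ n) * a ^ (2 * k) :=
          mul_le_mul (hg n) (pow_le_pow_left₀ (ht n).le (hta n) _)
            (pow_nonneg (ht n).le _) (by positivity)
      _ = (C * (a ^ 2) ^ k) * τ₁ ^ n := by rw [pow_mul]; ring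
  have hgeomC : ∀ K : ℝ, Summable (fun n : ℕ => K * τ₁ ^ n) :=
    fun K => (summable_geometric_of_lt_one hτ₁0.le hτ₁1).mul_left K
  have hsumMk : ∀ k, Summable (fun n => g n * (t n) ^ (2 * k)) :=
    fun k => Summable.of_norm_bounded (hgeomC _) (hbnd k)
  have hnormMk : ∀ k, Summable (fun n => ‖g n * (t n) ^ (2 * k)‖) :=
    fun k => Summable.of_nonneg_of_le (fun _ => norm_nonneg _) (hbnd k) (hgeomC _)
  have hMbound : ∀ k, |M k| ≤ (C * (1 - τ₁)⁻¹) * (a ^ 2) ^ k := by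
    intro k
    calc |M k| ≤ ∑' n, ‖g n * (t n) ^ (2 * k)‖ := by
          simpa using norm_tsum_le_tsum_norm (hnormMk k)
      _ ≤ ∑' n, (C * (a ^ 2) ^ k) * τ₁ ^ n := Summable.tsum_le_tsum (hbnd k) (hnormMk k) (hgeomC _)
      _ = (C * (a ^ 2) ^ k) * (1 - τ₁)⁻¹ := by
          rw [tsum_mul_left, tsum_geometric_of_lt_one hτ₁0.le hτ₁1]
      _ = (C * (1 - τ₁)⁻¹) * (a ^ 2) ^ k := by ring
  set cc : ℕ → ℝ := fun k => b k * M k with hccdef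
  have hccb : ∀ k, |cc k| ≤ (C * (1 - τ₁)⁻¹) * (τ₂ * a ^ 2) ^ k := by
    intro k
    simp only [hccdef]
    rw [abs_mul]
    calc |b k| * |M k| ≤ τ₂ ^ k * ((C * (1 - τ₁)⁻¹) * (a ^ 2) ^ k) :=
          mul_le_mul (hbb k) (hMbound k) (abs_nonneg _) (pow_nonneg hτ₂0.le k)
      _ = (C * (1 - τ₁)⁻¹) * (τ₂ * a ^ 2) ^ k := by rw [mul_pow]; ring
  -- Step 1 : the vanishing sums
  have key : ∀ s : ℕ, ∑' n, g n * jvR v q ((a * q ^ s) * t n) = 0 := by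
    intro s
    have h1 := h0 s
    simp only [Tav, qInt0] at h1
    have h2 : (∑' n : ℕ, q ^ n * (ψ (a * q ^ n) * jvR v q ((a * q ^ s) * (a * q ^ n)) *
        (a * q ^ n) ^ (2 * v + 1 : ℝ))) = 0 := by
      rcases mul_eq_zero.mp h1 with h | h
      · exact absurd h hcqv.ne'
      rcases mul_eq_zero.mp h with h' | h'
      · rcases mul_eq_zero.mp h' with h'' | h''
        · exact absurd h'' hq2.ne'
        · exact absurd h'' ha0.ne'
      · exact h'
    rw [← h2]
    exact tsum_congr fun n => by simp only [hgdef, htdef]; ring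
  -- Step 2 : swap the double sum
  have hswap : ∀ᶠ s : ℕ in Filter.atTop, ∑' k, cc k * ((a * q ^ s) ^ 2) ^ k = 0 := by
    have hev : ∀ᶠ s : ℕ in Filter.atTop, τ₂ * ((a * q ^ s) * a) ^ 2 < 1 := by
      have h1 : Filter.Tendsto (fun s : ℕ => (q ^ 2 : ℝ) ^ s) Filter.atTop (nhds 0) :=
        tendsto_pow_atTop_nhds_zero_of_lt_one hq20.le hq21
      have h2 := h1.const_mul (τ₂ * a ^ 4)
      simp only [mul_zero] at h2
      have h3 : Filter.Tendsto (fun s : ℕ => τ₂ * ((a * q ^ s) * a) ^ 2) Filter.atTop (nhds 0) := by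
        convert h2 using 2 with s
        rw [← pow_right_comm q s 2]
        ring
      exact h3.eventually_lt_const one_pos
    filter_upwards [hev] with s hs
    set x : ℝ := a * q ^ s with hxdef
    have hx0 : 0 < x := mul_pos ha0 (pow_pos hq0 s)
    set ρ : ℝ := τ₂ * (x * a) ^ 2 with hρdef
    have hρ0 : 0 ≤ ρ := by positivity
    have hρ1 : ρ < 1 := hs
    set F : ℕ → ℕ → ℝ := fun n k => g n * (b k * (x * t n) ^ (2 * k)) with hFdef
    have hFb : ∀ p : ℕ × ℕ, ‖Function.uncurry F p‖ ≤ (C * τ₁ ^ p.1) * ρ ^ p.2 := by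
      rintro ⟨n, k⟩
      simp only [Function.uncurry, hFdef]
      rw [Real.norm_eq_abs]
      have h1 : 0 < x * t n := mul_pos hx0 (ht n)
      have h2 : (x * t n) ^ (2 * k) ≤ (x * a) ^ (2 * k) :=
        pow_le_pow_left₀ h1.le (mul_le_mul_of_nonneg_left (hta n) hx0.le) _
      calc |g n * (b k * (x * t n) ^ (2 * k))| = |g n| * (|b k| * (x * t n) ^ (2 * k)) := by
            rw [abs_mul (g n), abs_mul (b k), abs_of_pos (pow_pos h1 (2 * k))]
        _ ≤ (C * τ₁ ^ n) * (τ₂ ^ k * (x * a) ^ (2 * k)) :=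
            mul_le_mul (hg n) (mul_le_mul (hbb k) h2 (pow_nonneg h1.le _)
              (pow_nonneg hτ₂0.le _)) (by positivity) (by positivity)
        _ = (C * τ₁ ^ n) * ρ ^ k := by rw [hρdef, pow_mul, ← mul_pow]
    have hGsum : Summable (fun p : ℕ × ℕ => (C * τ₁ ^ p.1) * ρ ^ p.2) :=
      Summable.mul_of_nonneg (hgeomC C) (summable_geometric_of_lt_one hρ0 hρ1)
        (fun n => by positivity) (fun k => by positivity)
    have hFsum : Summable (Function.uncurry F) := Summable.of_norm_bounded hGsum hFb
    have e1 : ∑' n, ∑' k, F n k = 0 := by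
      rw [← key s]
      apply tsum_congr
      intro n
      rw [hjvR (x * t n), ← tsum_mul_left]
    have e2 : ∑' k, ∑' n, F n k = 0 := (Summable.tsum_comm hFsum).trans e1
    calc ∑' k, cc k * ((a * q ^ s) ^ 2) ^ k = ∑' k, ∑' n, F n k := by
          apply tsum_congr
          intro k
          have e3 : ∑' n, F n k = (b k * x ^ (2 * k)) * ∑' n, g n * (t n) ^ (2 * k) := by
            rw [← tsum_mul_left]
            apply tsum_congr
            intro n
            simp only [hFdef]
            rw [mul_pow x (t n) (2 * k)]
            ring
          rw [e3]
          simp only [hccdef, hMdef, ← hxdef]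
          rw [← pow_mul]
          ring
      _ = 0 := e2
  -- Step 3 : all cc k vanish, hence all M k vanish
  have hccz : ∀ k, cc k = 0 :=
    lemA (x := fun s => (a * q ^ s) ^ 2) (by positivity) hccb
      (Filter.Eventually.of_forall fun s => by positivity)
      (by
        have h1 : Filter.Tendsto (fun s : ℕ => (q ^ 2 : ℝ) ^ s) Filter.atTop (nhds 0) :=
          tendsto_pow_atTop_nhds_zero_of_lt_one hq20.le hq21
        have h2 := h1.const_mul (a ^ 2)
        simp only [mul_zero] at h2
        convert h2 using 2 with s
        rw [mul_pow, ← pow_right_comm q s 2])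
      hswap
  have hMz : ∀ k, M k = 0 := by
    intro k
    have hbk : b k ≠ 0 := by
      simp only [hbdef]
      apply div_ne_zero
      · exact mul_ne_zero (pow_ne_zero _ (by norm_num)) (pow_ne_zero _ hq0.ne')
      · exact (hDpos k).ne'
    have h1 := hccz k
    simp only [hccdef] at h1
    rcases mul_eq_zero.mp h1 with h | h
    · exact absurd h hbk
    · exact h
  -- Step 4 : all g n vanish
  have hz4 : ∀ k : ℕ, ∑' n, g n * ((q ^ 2 : ℝ) ^ k) ^ n = 0 := by
    intro k
    have e : M k = (a ^ 2) ^ k * ∑' n, g n * ((q ^ 2 : ℝ) ^ k) ^ n := by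
      simp only [hMdef]
      rw [← tsum_mul_left]
      apply tsum_congr
      intro n
      simp only [htdef]
      rw [mul_pow a (q ^ n) (2 * k), pow_mul a 2 k,
        show ((q:ℝ) ^ n) ^ (2 * k) = ((q ^ 2) ^ k) ^ n by
          rw [← pow_mul, ← pow_mul, ← pow_mul]; ring_nf]
      ring
    have h1 := hMz k
    rw [e] at h1
    rcases mul_eq_zero.mp h1 with h | h
    · exact absurd h (by positivity)
    · exact h
  have hgz : ∀ n, g n = 0 :=
    lemA (x := fun k => (q ^ 2 : ℝ) ^ k) hτ₁0.le hg
      (Filter.Eventually.of_forall fun k => (pow_pos hq20 k).ne')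
      (tendsto_pow_atTop_nhds_zero_of_lt_one hq20.le hq21)
      (Filter.Eventually.of_forall hz4)
  -- Conclusion
  intro s
  have h1 := hgz s
  simp only [hgdef] at h1
  rcases mul_eq_zero.mp h1 with h | h
  · rcases mul_eq_zero.mp h with h' | h'
    · exact absurd h' (pow_pos hq0 s).ne'
    · simpa only [htdef] using h'
  · exact absurd h (Real.rpow_pos_of_pos (ht s) _).ne'
end

section
/- Explicit kernel formula: for z \in \mathbb{C}, z^2 \neq q^{2n}, k_z(q^n) = \frac{(1-q)c_{q,v}^2}{1-q^{2v+2}} a^{2v+2} \cdot \frac{q^{2n} j_{v+1}(aq^n,q^2) j_v(aq^{-1}z,q^2) - z^2 j_{v+1}(az,q^2) j_v(aq^{n-1},q^2)}{q^{2n}-z^2}. -/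
/-- The kernel `k_z(y)` with complex `z`. -/
noncomputable def kkerC (q v a : ℝ) (z : ℂ) (y : ℝ) : ℂ :=
  ((cqv q v ^ 2 : ℝ) : ℂ) *
    qIntC0 q a (fun t => jv v q (z * t) * ((jvR v q (y * t) * t ^ (2 * v + 1 : ℝ) : ℝ) : ℂ))

noncomputable def jterm (v q : ℝ) (z : ℂ) (n : ℕ) : ℂ :=
  (-1 : ℂ) ^ n * (q : ℂ) ^ (n * (n + 1)) * z ^ (2 * n) /
    ((qPoch (q ^ 2) (q ^ 2) n * qPoch (q ^ (2 * v + 2 : ℝ)) (q ^ 2) n : ℝ) : ℂ)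

lemma jv_eq_tsum (v q : ℝ) (z : ℂ) : jv v q z = ∑' n, jterm v q z n := by
  unfold jv jterm; push_cast; rfl

lemma b_pos {q : ℝ} (hq0 : 0 < q) (s : ℝ) : 0 < q ^ (s : ℝ) := Real.rpow_pos_of_pos hq0 _

lemma b_lt_one {q s : ℝ} (hq0 : 0 < q) (hq1 : q < 1) (hs : 0 < s) : q ^ (s : ℝ) < 1 :=
  Real.rpow_lt_one (le_of_lt hq0) hq1 hs

lemma qPoch_pos {q b : ℝ} (hq0 : 0 ≤ q) (hq1 : q ≤ 1) (hb0 : 0 ≤ b) (hb1 : b < 1) (n : ℕ) :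
    0 < qPoch b q n := by
  apply Finset.prod_pos
  intro i _
  have h1 : q ^ i ≤ 1 := pow_le_one₀ hq0 hq1
  have h2 : b * q ^ i ≤ b * 1 := mul_le_mul_of_nonneg_left h1 hb0
  nlinarith

lemma qPoch_succ (q b : ℝ) (n : ℕ) : qPoch b q (n + 1) = qPoch b q n * (1 - b * q ^ n) :=
  Finset.prod_range_succ _ _

lemma qPoch_shift (q b : ℝ) (n : ℕ) :
    qPoch b q (n + 1) = (1 - b) * qPoch (b * q) q n := by
  rw [qPoch, Finset.prod_range_succ']
  simp only [pow_zero, mul_one, qPoch]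
  rw [mul_comm]
  congr 1
  apply Finset.prod_congr rfl
  intro i _
  ring

section series
variable {q v : ℝ}

lemma jterm_zero (v q : ℝ) (z : ℂ) : jterm v q z 0 = 1 := by
  simp [jterm, qPoch]

lemma jterm_succ (hq0 : 0 < q) (hq1 : q < 1) (hv : -1 < v) (z : ℂ) (n : ℕ) :
    jterm v q z (n + 1) = jterm v q z n *
      (-((q:ℂ) ^ (2 * n + 2) * z ^ 2) /
        (((1 - q ^ (2 * n + 2)) * (1 - q ^ (2 * v + 2 : ℝ) * (q ^ 2) ^ n) : ℝ) : ℂ)) := by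
  have hb0 : (0:ℝ) < q ^ (2 * v + 2 : ℝ) := b_pos hq0 _
  have hb1 : q ^ (2 * v + 2 : ℝ) < 1 := b_lt_one hq0 hq1 (by linarith)
  have hq20 : (0:ℝ) ≤ q ^ 2 := by positivity
  have hq21 : q ^ 2 ≤ 1 := by nlinarith
  have hP : (0:ℝ) < qPoch (q ^ 2) (q ^ 2) n := qPoch_pos hq20 hq21 hq20 (by nlinarith) n
  have hQ : (0:ℝ) < qPoch (q ^ (2 * v + 2 : ℝ)) (q ^ 2) n :=
    qPoch_pos hq20 hq21 (le_of_lt hb0) hb1 n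
  have h1 : (0:ℝ) < 1 - q ^ (2 * n + 2) := by
    have : q ^ (2 * n + 2) < 1 := pow_lt_one₀ (le_of_lt hq0) hq1 (by omega)
    linarith
  have h2 : (0:ℝ) < 1 - q ^ (2 * v + 2 : ℝ) * (q ^ 2) ^ n := by
    have hp : (q ^ 2) ^ n ≤ 1 := pow_le_one₀ hq20 hq21
    nlinarith
  simp only [jterm, qPoch_succ]
  have he1 : (n + 1) * (n + 1 + 1) = n * (n + 1) + (2 * n + 2) := by ring
  have he2 : 2 * (n + 1) = 2 * n + 2 := by ring
  rw [he1, he2, pow_add, pow_add]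
  have h2n : ((q:ℂ) ^ 2) ^ n = (q:ℂ) ^ (2 * n) := by rw [← pow_mul]
  push_cast
  rw [h2n]
  have hPc : ((qPoch (q ^ 2) (q ^ 2) n : ℝ) : ℂ) ≠ 0 := by exact_mod_cast ne_of_gt hP
  have hQc : ((qPoch (q ^ (2 * v + 2 : ℝ)) (q ^ 2) n : ℝ) : ℂ) ≠ 0 := by
    exact_mod_cast ne_of_gt hQ
  have h1c : (1:ℂ) - (q:ℂ) ^ (2 * n + 2) ≠ 0 := by
    have := ne_of_gt h1
    push_cast at this ⊢
    intro hc; apply this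
    have : ((1 - q ^ (2 * n + 2) : ℝ) : ℂ) = 0 := by push_cast; linear_combination hc
    exact_mod_cast this
  have h2c : (1:ℂ) - (q ^ (2 * v + 2 : ℝ) : ℝ) * (q:ℂ) ^ (2 * n) ≠ 0 := by
    have := ne_of_gt h2
    intro hc; apply this
    have hcast : ((1 - q ^ (2 * v + 2 : ℝ) * (q ^ 2) ^ n : ℝ) : ℂ) = 0 := by
      push_cast
      rw [h2n]
      linear_combination hc
    exact_mod_cast hcast
  rw [pow_add]
  field_simp
  ring
end series

section summability
variable {q v : ℝ}

lemma summable_norm_jterm (hq0 : 0 < q) (hq1 : q < 1) (hv : -1 < v) (z : ℂ) :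
    Summable (fun n => ‖jterm v q z n‖) := by
  have hb0 : (0:ℝ) < q ^ (2 * v + 2 : ℝ) := b_pos hq0 _
  have hb1 : q ^ (2 * v + 2 : ℝ) < 1 := b_lt_one hq0 hq1 (by linarith)
  have hq2 : q ^ 2 < 1 := by nlinarith
  have hden : (0:ℝ) < (1 - q ^ 2) * (1 - q ^ (2 * v + 2 : ℝ)) := by nlinarith
  apply summable_of_ratio_norm_eventually_le (r := 1/2) (by norm_num)
  have htend : Filter.Tendsto (fun n : ℕ => q ^ (2 * n + 2) * ‖z‖ ^ 2)
      Filter.atTop (nhds 0) := by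
    have h0 : Filter.Tendsto (fun n : ℕ => (q ^ 2) ^ n) Filter.atTop (nhds 0) :=
      tendsto_pow_atTop_nhds_zero_of_lt_one (by positivity) hq2
    have h1 := (h0.const_mul (q ^ 2 * ‖z‖ ^ 2))
    simp only [mul_zero] at h1
    apply h1.congr
    intro n
    rw [pow_add, ← pow_mul]
    ring
  have heps : ∀ᶠ n : ℕ in Filter.atTop,
      q ^ (2 * n + 2) * ‖z‖ ^ 2 ≤ (1/2) * ((1 - q ^ 2) * (1 - q ^ (2 * v + 2 : ℝ))) :=
    htend.eventually (ge_mem_nhds (by positivity))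
  filter_upwards [heps] with n hn
  rw [norm_norm, norm_norm, jterm_succ hq0 hq1 hv, norm_mul]
  have h1 : (0:ℝ) < 1 - q ^ (2 * n + 2) := by
    have : q ^ (2 * n + 2) < 1 := pow_lt_one₀ (le_of_lt hq0) hq1 (by omega)
    linarith
  have h2 : (0:ℝ) < 1 - q ^ (2 * v + 2 : ℝ) * (q ^ 2) ^ n := by
    have hp : (q ^ 2) ^ n ≤ 1 := pow_le_one₀ (by positivity) (le_of_lt hq2)
    nlinarith
  have hfac : ‖-((q:ℂ) ^ (2 * n + 2) * z ^ 2) /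
      (((1 - q ^ (2 * n + 2)) * (1 - q ^ (2 * v + 2 : ℝ) * (q ^ 2) ^ n) : ℝ) : ℂ)‖
      ≤ 1/2 := by
    rw [norm_div, norm_neg, norm_mul, norm_pow, norm_pow, Complex.norm_real,
      Complex.norm_real, Real.norm_of_nonneg (le_of_lt hq0),
      Real.norm_of_nonneg (by nlinarith : (0:ℝ) ≤ (1 - q ^ (2 * n + 2)) *
        (1 - q ^ (2 * v + 2 : ℝ) * (q ^ 2) ^ n))]
    rw [div_le_iff₀ (by nlinarith)]
    calc q ^ (2 * n + 2) * ‖z‖ ^ 2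
        ≤ (1/2) * ((1 - q ^ 2) * (1 - q ^ (2 * v + 2 : ℝ))) := hn
      _ ≤ 1/2 * ((1 - q ^ (2 * n + 2)) * (1 - q ^ (2 * v + 2 : ℝ) * (q ^ 2) ^ n)) := by
          have e1 : q ^ (2*n+2) ≤ q ^ 2 := by
            apply pow_le_pow_of_le_one (le_of_lt hq0) (le_of_lt hq1) (by omega)
          have e2 : q ^ (2 * v + 2 : ℝ) * (q ^ 2) ^ n ≤ q ^ (2 * v + 2 : ℝ) := by
            have hp : (q ^ 2) ^ n ≤ 1 := pow_le_one₀ (by positivity) (le_of_lt hq2)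
            nlinarith
          nlinarith
  have := mul_le_mul_of_nonneg_left hfac (norm_nonneg (jterm v q z n))
  linarith

lemma summable_jterm (hq0 : 0 < q) (hq1 : q < 1) (hv : -1 < v) (z : ℂ) :
    Summable (jterm v q z) :=
  (summable_norm_jterm hq0 hq1 hv z).of_norm

lemma norm_jterm_le {z : ℂ} {R : ℝ} (hR : ‖z‖ ≤ R) (n : ℕ) :
    ‖jterm v q z n‖ ≤ ‖jterm v q (R:ℂ) n‖ := by
  simp only [jterm, norm_div, norm_mul, norm_pow, norm_neg, norm_one, one_pow, one_mul]
  gcongr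
  rw [Complex.norm_real]
  exact hR.trans (le_abs_self R)

lemma norm_jv_le (hq0 : 0 < q) (hq1 : q < 1) (hv : -1 < v) {z : ℂ} {R : ℝ} (hR : ‖z‖ ≤ R) :
    ‖jv v q z‖ ≤ ∑' n, ‖jterm v q (R:ℂ) n‖ := by
  rw [jv_eq_tsum]
  refine (norm_tsum_le_tsum_norm (summable_norm_jterm hq0 hq1 hv z)).trans ?_
  exact Summable.tsum_le_tsum (norm_jterm_le hR) (summable_norm_jterm hq0 hq1 hv z)
    (summable_norm_jterm hq0 hq1 hv (R:ℂ))

end summability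

section relations
variable {q v : ℝ}

lemma rpow_shift (hq0 : 0 < q) (v : ℝ) :
    q ^ (2 * (v + 1) + 2 : ℝ) = q ^ (2 * v + 2 : ℝ) * q ^ 2 := by
  rw [show (2 * (v + 1) + 2 : ℝ) = (2 * v + 2) + ((2:ℕ):ℝ) by push_cast; ring,
    Real.rpow_add hq0, Real.rpow_natCast]

lemma jterm_scale (v q : ℝ) (c x : ℂ) (n : ℕ) :
    jterm v q (c * x) n = c ^ (2 * n) * jterm v q x n := by
  simp only [jterm, mul_pow]
  ring

lemma aux_pos {q v : ℝ} (hq0 : 0 < q) (hq1 : q < 1) (hv : -1 < v) (n : ℕ) :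
    (0:ℝ) < 1 - q ^ (2 * n + 2) ∧ (0:ℝ) < 1 - q ^ (2 * v + 2 : ℝ) * (q ^ 2) ^ n ∧
      (0:ℝ) < 1 - q ^ (2 * v + 2 : ℝ) ∧ (0:ℝ) < qPoch (q ^ 2) (q ^ 2) n ∧
      (0:ℝ) < qPoch (q ^ (2 * v + 2 : ℝ)) (q ^ 2) n := by
  have hb0 : (0:ℝ) < q ^ (2 * v + 2 : ℝ) := b_pos hq0 _
  have hb1 : q ^ (2 * v + 2 : ℝ) < 1 := b_lt_one hq0 hq1 (by linarith)
  have hp1 : (q ^ 2) ^ n ≤ 1 := pow_le_one₀ (by positivity) (by nlinarith)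
  refine ⟨?_, by nlinarith, by linarith, ?_, ?_⟩
  · have : q ^ (2 * n + 2) < 1 := pow_lt_one₀ (le_of_lt hq0) hq1 (by omega)
    linarith
  · exact qPoch_pos (by positivity) (by nlinarith) (by positivity) (by nlinarith) n
  · exact qPoch_pos (by positivity) (by nlinarith) (le_of_lt hb0) hb1 n

lemma jterm_vsucc (hq0 : 0 < q) (hq1 : q < 1) (hv : -1 < v) (x : ℂ) (n : ℕ) :
    jterm (v + 1) q x n = jterm v q x n * ((1 - q ^ (2 * v + 2 : ℝ) : ℝ) : ℂ) /
      (((1 - q ^ (2 * v + 2 : ℝ) * (q ^ 2) ^ n : ℝ) : ℂ)) := by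
  obtain ⟨h1r, h2r, hbr, hPr, hQr⟩ := aux_pos hq0 hq1 hv (v := v) n
  have hQ'r : (0:ℝ) < qPoch (q ^ (2 * v + 2 : ℝ) * q ^ 2) (q ^ 2) n := by
    have hb0 : (0:ℝ) < q ^ (2 * v + 2 : ℝ) := b_pos hq0 _
    have hb1 : q ^ (2 * v + 2 : ℝ) < 1 := b_lt_one hq0 hq1 (by linarith)
    exact qPoch_pos (by positivity) (by nlinarith) (by positivity) (by nlinarith) n
  have hrel : qPoch (q ^ (2 * v + 2 : ℝ) * q ^ 2) (q ^ 2) n * (1 - q ^ (2 * v + 2 : ℝ)) =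
      qPoch (q ^ (2 * v + 2 : ℝ)) (q ^ 2) n * (1 - q ^ (2 * v + 2 : ℝ) * (q ^ 2) ^ n) := by
    rw [mul_comm (qPoch _ _ _), ← qPoch_shift, ← qPoch_succ]
  simp only [jterm, rpow_shift hq0]
  have c1 : ((qPoch (q ^ 2) (q ^ 2) n * qPoch (q ^ (2 * v + 2 : ℝ) * q ^ 2) (q ^ 2) n : ℝ) : ℂ)
      ≠ 0 := by
    have : (0:ℝ) < qPoch (q ^ 2) (q ^ 2) n * qPoch (q ^ (2 * v + 2 : ℝ) * q ^ 2) (q ^ 2) n :=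
      mul_pos hPr hQ'r
    exact_mod_cast ne_of_gt this
  have c2 : ((qPoch (q ^ 2) (q ^ 2) n * qPoch (q ^ (2 * v + 2 : ℝ)) (q ^ 2) n : ℝ) : ℂ) ≠ 0 := by
    have : (0:ℝ) < qPoch (q ^ 2) (q ^ 2) n * qPoch (q ^ (2 * v + 2 : ℝ)) (q ^ 2) n :=
      mul_pos hPr hQr
    exact_mod_cast ne_of_gt this
  have c3 : ((1 - q ^ (2 * v + 2 : ℝ) * (q ^ 2) ^ n : ℝ) : ℂ) ≠ 0 := by
    exact_mod_cast ne_of_gt h2r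
  rw [div_mul_eq_mul_div, div_div, div_eq_div_iff c1 (mul_ne_zero c2 c3)]
  have hrelC := congrArg (Complex.ofReal) hrel
  push_cast at hrelC ⊢
  linear_combination (-((-1:ℂ) ^ n) * (q:ℂ) ^ (n * (n + 1)) * x ^ (2 * n) *
    ((qPoch (q ^ 2) (q ^ 2) n : ℝ) : ℂ)) * hrelC

lemma jterm_R2 (hq0 : 0 < q) (hq1 : q < 1) (hv : -1 < v) (x : ℂ) (n : ℕ) :
    jterm v q x (n + 1) - jterm v q (x / q) (n + 1) =
      x ^ 2 / ((1 - q ^ (2 * v + 2 : ℝ) : ℝ) : ℂ) * jterm (v + 1) q x n := by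
  obtain ⟨h1r, h2r, hbr, hPr, hQr⟩ := aux_pos hq0 hq1 hv (v := v) n
  have hqc : (q:ℂ) ≠ 0 := by exact_mod_cast ne_of_gt hq0
  have hdiv : x / q = ((q:ℂ)⁻¹) * x := by field_simp
  rw [hdiv, jterm_scale, jterm_succ hq0 hq1 hv x n, jterm_vsucc hq0 hq1 hv x n]
  have hD : (((1 - q ^ (2 * n + 2)) * (1 - q ^ (2 * v + 2 : ℝ) * (q ^ 2) ^ n) : ℝ) : ℂ) ≠ 0 := by
    have : (0:ℝ) < (1 - q ^ (2 * n + 2)) * (1 - q ^ (2 * v + 2 : ℝ) * (q ^ 2) ^ n) := by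
      exact mul_pos h1r h2r
    exact_mod_cast ne_of_gt this
  have c3 : ((1 - q ^ (2 * v + 2 : ℝ) * (q ^ 2) ^ n : ℝ) : ℂ) ≠ 0 := by
    exact_mod_cast ne_of_gt h2r
  have c4 : ((1 - q ^ (2 * v + 2 : ℝ) : ℝ) : ℂ) ≠ 0 := by exact_mod_cast ne_of_gt hbr
  set d : ℂ := (((1 - q ^ (2 * n + 2)) * (1 - q ^ (2 * v + 2 : ℝ) * (q ^ 2) ^ n) : ℝ) : ℂ)
    with hd
  set e : ℂ := ((1 - q ^ (2 * v + 2 : ℝ) * (q ^ 2) ^ n : ℝ) : ℂ) with he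
  set f : ℂ := ((1 - q ^ (2 * v + 2 : ℝ) : ℝ) : ℂ) with hf
  field_simp [hqc, hD, c3, c4]
  rw [hd, he]
  push_cast
  have hinv : (q:ℂ)⁻¹ ^ (2 * n + 2) * (q:ℂ) ^ (2 * n + 2) = 1 := by
    rw [← mul_pow, inv_mul_cancel₀ hqc, one_pow]
  linear_combination (jterm v q x n * x ^ 2 *
    ((1:ℂ) - ((q ^ (2 * v + 2 : ℝ) : ℝ) : ℂ) * ((q:ℂ) ^ 2) ^ n)) * hinv

lemma jterm_E (hq0 : 0 < q) (hq1 : q < 1) (hv : -1 < v) (x : ℂ) (n : ℕ) :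
    (q:ℂ) ^ 2 * jterm v q (x / q) (n + 1)
      + ((q ^ (2 * v + 2 : ℝ) : ℝ) : ℂ) * jterm v q ((q:ℂ) * x) (n + 1)
      - ((q:ℂ) ^ 2 + ((q ^ (2 * v + 2 : ℝ) : ℝ) : ℂ)) * jterm v q x (n + 1)
      = -(q:ℂ) ^ 2 * x ^ 2 * jterm v q x n := by
  obtain ⟨h1r, h2r, hbr, hPr, hQr⟩ := aux_pos hq0 hq1 hv (v := v) n
  have hqc : (q:ℂ) ≠ 0 := by exact_mod_cast ne_of_gt hq0
  have hdiv : x / q = ((q:ℂ)⁻¹) * x := by field_simp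
  rw [hdiv, jterm_scale, jterm_scale, jterm_succ hq0 hq1 hv x n]
  have hD : (((1 - q ^ (2 * n + 2)) * (1 - q ^ (2 * v + 2 : ℝ) * (q ^ 2) ^ n) : ℝ) : ℂ) ≠ 0 := by
    have : (0:ℝ) < (1 - q ^ (2 * n + 2)) * (1 - q ^ (2 * v + 2 : ℝ) * (q ^ 2) ^ n) :=
      mul_pos h1r h2r
    exact_mod_cast ne_of_gt this
  set d : ℂ := (((1 - q ^ (2 * n + 2)) * (1 - q ^ (2 * v + 2 : ℝ) * (q ^ 2) ^ n) : ℝ) : ℂ)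
    with hd
  field_simp [hqc, hD]
  rw [hd]
  push_cast
  have hinv : (q:ℂ)⁻¹ ^ (2 * n + 2) * (q:ℂ) ^ (2 * n + 2) = 1 := by
    rw [← mul_pow, inv_mul_cancel₀ hqc, one_pow]
  have hvv : ((q ^ (2 * (v + 1) : ℝ) : ℝ) : ℂ) = ((q ^ (2 * v + 2 : ℝ) : ℝ) : ℂ) := by
    rw [show (2 * (v + 1) : ℝ) = 2 * v + 2 by ring]
  linear_combination (-(jterm v q x n * (q:ℂ) ^ 2 * x ^ 2)) * hinv
    + (jterm v q x n * (q:ℂ) ^ 2 * (q:ℂ) ^ (n * 2) * x ^ 2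
      - jterm v q x n * (q:ℂ) ^ 4 * (q:ℂ) ^ (n * 4) * x ^ 2) * hvv

end relations

section sums
variable {q v : ℝ}

lemma jv_R2 (hq0 : 0 < q) (hq1 : q < 1) (hv : -1 < v) (x : ℂ) :
    jv v q x - jv v q (x / q) =
      x ^ 2 / ((1 - q ^ (2 * v + 2 : ℝ) : ℝ) : ℂ) * jv (v + 1) q x := by
  have hv1 : -1 < v + 1 := by linarith
  have s1 := summable_jterm hq0 hq1 hv x
  have s2 := summable_jterm hq0 hq1 hv (x / (q:ℂ))
  have s3 := summable_jterm hq0 hq1 hv1 (v := v + 1) x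
  rw [jv_eq_tsum, jv_eq_tsum, jv_eq_tsum, ← Summable.tsum_sub s1 s2]
  rw [Summable.tsum_eq_zero_add (s1.sub s2)]
  simp only [jterm_zero, sub_self, zero_add]
  rw [tsum_congr (fun n => jterm_R2 hq0 hq1 hv x n), tsum_mul_left]

lemma jv_E (hq0 : 0 < q) (hq1 : q < 1) (hv : -1 < v) (x : ℂ) :
    (q:ℂ) ^ 2 * jv v q (x / q) + ((q ^ (2 * v + 2 : ℝ) : ℝ) : ℂ) * jv v q ((q:ℂ) * x)
      - ((q:ℂ) ^ 2 + ((q ^ (2 * v + 2 : ℝ) : ℝ) : ℂ)) * jv v q x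
      = -(q:ℂ) ^ 2 * x ^ 2 * jv v q x := by
  have s1 := summable_jterm hq0 hq1 hv (x / (q:ℂ))
  have s2 := summable_jterm hq0 hq1 hv ((q:ℂ) * x)
  have s3 := summable_jterm hq0 hq1 hv x
  have h1 : Summable (fun n => (q:ℂ) ^ 2 * jterm v q (x / q) n) := s1.mul_left _
  have h2 : Summable (fun n =>
      ((q ^ (2 * v + 2 : ℝ) : ℝ) : ℂ) * jterm v q ((q:ℂ) * x) n) := s2.mul_left _
  have h3 : Summable (fun n =>
      ((q:ℂ) ^ 2 + ((q ^ (2 * v + 2 : ℝ) : ℝ) : ℂ)) * jterm v q x n) := s3.mul_left _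
  have e1 : (q:ℂ) ^ 2 * jv v q (x / q) = ∑' n, (q:ℂ) ^ 2 * jterm v q (x / q) n := by
    rw [jv_eq_tsum, tsum_mul_left]
  have e2 : ((q ^ (2 * v + 2 : ℝ) : ℝ) : ℂ) * jv v q ((q:ℂ) * x)
      = ∑' n, ((q ^ (2 * v + 2 : ℝ) : ℝ) : ℂ) * jterm v q ((q:ℂ) * x) n := by
    rw [jv_eq_tsum, tsum_mul_left]
  have e3 : ((q:ℂ) ^ 2 + ((q ^ (2 * v + 2 : ℝ) : ℝ) : ℂ)) * jv v q x
      = ∑' n, ((q:ℂ) ^ 2 + ((q ^ (2 * v + 2 : ℝ) : ℝ) : ℂ)) * jterm v q x n := by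
    rw [jv_eq_tsum, tsum_mul_left]
  rw [e1, e2, e3, ← Summable.tsum_add h1 h2, ← Summable.tsum_sub (h1.add h2) h3]
  rw [Summable.tsum_eq_zero_add ((h1.add h2).sub h3)]
  have hF0 : (q:ℂ) ^ 2 * jterm v q (x / q) 0
      + ((q ^ (2 * v + 2 : ℝ) : ℝ) : ℂ) * jterm v q ((q:ℂ) * x) 0
      - ((q:ℂ) ^ 2 + ((q ^ (2 * v + 2 : ℝ) : ℝ) : ℂ)) * jterm v q x 0 = 0 := by
    simp only [jterm_zero]; ring
  rw [hF0, zero_add, tsum_congr (fun n => jterm_E hq0 hq1 hv x n)]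
  rw [jv_eq_tsum, tsum_mul_left]

end sums

noncomputable def Fker (q v a : ℝ) (y z : ℂ) (k : ℕ) : ℂ :=
  ((q ^ k : ℝ) : ℂ) * jv v q (y * ((a * q ^ k : ℝ) : ℂ)) * jv v q (z * ((a * q ^ k : ℝ) : ℂ)) *
    (((a * q ^ k) ^ (2 * v + 1 : ℝ) : ℝ) : ℂ)

noncomputable def Gker (q v a : ℝ) (y z : ℂ) (k : ℕ) : ℂ :=
  ((q ^ k * (a * q ^ k) ^ (2 * v - 1 : ℝ) : ℝ) : ℂ) *
    (jv v q (y * ((a * q ^ k : ℝ) : ℂ) / q) * jv v q (z * ((a * q ^ k : ℝ) : ℂ))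
      - jv v q (y * ((a * q ^ k : ℝ) : ℂ)) * jv v q (z * ((a * q ^ k : ℝ) : ℂ) / q))

section core
variable {q v a : ℝ}

lemma weight_eq (hq0 : 0 < q) (ha : 0 < a) (v : ℝ) (k : ℕ) :
    q ^ k * (a * q ^ k) ^ (2 * v + 1 : ℝ) = a ^ (2 * v + 1 : ℝ) * (q ^ (2 * v + 2 : ℝ)) ^ k := by
  have hqk : (0:ℝ) < q ^ k := by positivity
  rw [Real.mul_rpow (le_of_lt ha) (le_of_lt hqk)]
  rw [← Real.rpow_natCast q k, ← Real.rpow_mul (le_of_lt hq0),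
    ← Real.rpow_natCast (q ^ (2 * v + 2 : ℝ)) k, ← Real.rpow_mul (le_of_lt hq0)]
  have key : q ^ ((k:ℝ)) * q ^ ((k:ℝ) * (2 * v + 1)) = q ^ ((2 * v + 2) * (k:ℝ)) := by
    rw [← Real.rpow_add hq0]; ring_nf
  linear_combination (a ^ (2 * v + 1 : ℝ)) * key

lemma step_coef (hq0 : 0 < q) (ha : 0 < a) (v : ℝ) (k : ℕ) :
    q ^ (k + 1) * (a * q ^ (k + 1)) ^ (2 * v - 1 : ℝ) * q ^ 2
      = q ^ k * (a * q ^ k) ^ (2 * v - 1 : ℝ) * q ^ (2 * v + 2 : ℝ) := by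
  rw [show a * q ^ (k + 1) = q * (a * q ^ k) by ring,
    Real.mul_rpow (le_of_lt hq0) (by positivity)]
  have h3 : q ^ (2 * v + 2 : ℝ) = q ^ (2 * v - 1 : ℝ) * q ^ 3 := by
    rw [← Real.rpow_natCast q 3, ← Real.rpow_add hq0]
    congr 1; ring
  rw [h3, pow_succ]
  ring

lemma tau_split (ha0 : 0 < a) (hq0 : 0 < q) (v : ℝ) (k : ℕ) :
    (a * q ^ k) ^ (2 * v + 1 : ℝ) = (a * q ^ k) ^ (2 * v - 1 : ℝ) * (a * q ^ k) ^ 2 := by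
  rw [← Real.rpow_natCast (a * q ^ k) 2, ← Real.rpow_add (by positivity)]
  congr 1; ring

lemma step_eq (hq0 : 0 < q) (hq1 : q < 1) (hv : -1 < v) (ha : 0 < a) (y z : ℂ) (k : ℕ) :
    (y ^ 2 - z ^ 2) * Fker q v a y z k = Gker q v a y z (k + 1) - Gker q v a y z k := by
  have hqc : (q:ℂ) ≠ 0 := by exact_mod_cast ne_of_gt hq0
  unfold Fker Gker
  set tc : ℂ := ((a * q ^ k : ℝ) : ℂ) with htc
  have hc1 : ((a * q ^ (k + 1) : ℝ) : ℂ) = (q:ℂ) * tc := by rw [htc]; push_cast; ring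
  rw [hc1]
  have harg1 : y * ((q:ℂ) * tc) / q = y * tc := by field_simp
  have harg2 : z * ((q:ℂ) * tc) / q = z * tc := by field_simp
  have harg3 : y * ((q:ℂ) * tc) = (q:ℂ) * (y * tc) := by ring
  have harg4 : z * ((q:ℂ) * tc) = (q:ℂ) * (z * tc) := by ring
  rw [harg1, harg2, harg3, harg4]
  have Ef := jv_E hq0 hq1 hv (y * tc)
  have Eg := jv_E hq0 hq1 hv (z * tc)
  have hcoefR := step_coef hq0 ha v k
  have hcoef : ((q ^ (k + 1) * (a * q ^ (k + 1)) ^ (2 * v - 1 : ℝ) : ℝ) : ℂ) * (q:ℂ) ^ 2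
      = ((q ^ k * (a * q ^ k) ^ (2 * v - 1 : ℝ) : ℝ) : ℂ) * ((q ^ (2 * v + 2 : ℝ) : ℝ) : ℂ) := by
    exact_mod_cast congrArg Complex.ofReal hcoefR
  have hwR := tau_split ha hq0 v k
  have hw : ((q ^ k : ℝ) : ℂ) * (((a * q ^ k) ^ (2 * v + 1 : ℝ) : ℝ) : ℂ)
      = ((q ^ k * (a * q ^ k) ^ (2 * v - 1 : ℝ) : ℝ) : ℂ) * tc ^ 2 := by
    rw [htc]
    have := congrArg Complex.ofReal hwR
    push_cast at this ⊢
    linear_combination ((q:ℂ) ^ k) * this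
  refine mul_left_cancel₀ (pow_ne_zero 2 hqc) ?_
  linear_combination ((q:ℂ) ^ 2 * (y ^ 2 - z ^ 2) * jv v q (y * tc) * jv v q (z * tc)) * hw
    + (((q ^ k * (a * q ^ k) ^ (2 * v - 1 : ℝ) : ℝ) : ℂ) * jv v q (z * tc)) * Ef
    - (((q ^ k * (a * q ^ k) ^ (2 * v - 1 : ℝ) : ℝ) : ℂ) * jv v q (y * tc)) * Eg
    - (jv v q (y * tc) * jv v q ((q:ℂ) * (z * tc))
        - jv v q ((q:ℂ) * (y * tc)) * jv v q (z * tc)) * hcoef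

lemma G_eq (hq0 : 0 < q) (hq1 : q < 1) (hv : -1 < v) (ha : 0 < a) (y z : ℂ) (k : ℕ) :
    Gker q v a y z k = -(((q ^ k * (a * q ^ k) ^ (2 * v + 1 : ℝ) : ℝ) : ℂ) /
        ((1 - q ^ (2 * v + 2 : ℝ) : ℝ) : ℂ) *
      (y ^ 2 * jv (v + 1) q (y * ((a * q ^ k : ℝ) : ℂ)) * jv v q (z * ((a * q ^ k : ℝ) : ℂ) / q)
        - z ^ 2 * jv (v + 1) q (z * ((a * q ^ k : ℝ) : ℂ))
          * jv v q (y * ((a * q ^ k : ℝ) : ℂ) / q))) := by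
  unfold Gker
  set tc : ℂ := ((a * q ^ k : ℝ) : ℂ) with htc
  have r1 := jv_R2 hq0 hq1 hv (y * tc)
  have r2 := jv_R2 hq0 hq1 hv (z * tc)
  have hcR := tau_split ha hq0 v k
  have hc : ((q ^ k * (a * q ^ k) ^ (2 * v - 1 : ℝ) : ℝ) : ℂ) * tc ^ 2
      = ((q ^ k * (a * q ^ k) ^ (2 * v + 1 : ℝ) : ℝ) : ℂ) := by
    rw [htc]
    have := congrArg Complex.ofReal hcR
    push_cast at this ⊢
    linear_combination ((q:ℂ) ^ k) * this.symm
  set f : ℂ := ((1 - q ^ (2 * v + 2 : ℝ) : ℝ) : ℂ) with hf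
  set P : ℂ := ((q ^ k * (a * q ^ k) ^ (2 * v - 1 : ℝ) : ℝ) : ℂ) with hP
  linear_combination (-(P * jv v q (z * tc / q))) * r1 + (P * jv v q (y * tc / q)) * r2
    - (f⁻¹ * (y ^ 2 * jv (v + 1) q (y * tc) * jv v q (z * tc / q)
        - z ^ 2 * jv (v + 1) q (z * tc) * jv v q (y * tc / q))) * hc

end core

section core2
variable {q v a : ℝ}

lemma arg_norm_le (hq0 : 0 < q) (hq1 : q < 1) (ha : 0 < a) (y : ℂ) (k : ℕ) :
    ‖y * ((a * q ^ k : ℝ) : ℂ)‖ ≤ ‖y‖ * a := by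
  rw [norm_mul, Complex.norm_real, Real.norm_of_nonneg (by positivity)]
  have h1 : a * q ^ k ≤ a := by
    nlinarith [pow_le_one₀ (le_of_lt hq0) (le_of_lt hq1) (n := k)]
  exact mul_le_mul_of_nonneg_left h1 (norm_nonneg y)

lemma arg_norm_le' (hq0 : 0 < q) (hq1 : q < 1) (ha : 0 < a) (y : ℂ) (k : ℕ) :
    ‖y * ((a * q ^ k : ℝ) : ℂ) / q‖ ≤ ‖y‖ * (a / q) := by
  rw [norm_div, Complex.norm_real, Real.norm_of_nonneg (le_of_lt hq0), div_le_iff₀ hq0]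
  have := arg_norm_le hq0 hq1 ha y k
  calc ‖y * ((a * q ^ k : ℝ) : ℂ)‖ ≤ ‖y‖ * a := this
    _ = ‖y‖ * (a / q) * q := by field_simp

lemma summable_Fker (hq0 : 0 < q) (hq1 : q < 1) (hv : -1 < v) (ha : 0 < a) (y z : ℂ) :
    Summable (Fker q v a y z) := by
  set My := ∑' n, ‖jterm v q ((‖y‖ * a : ℝ) : ℂ) n‖ with hMy
  set Mz := ∑' n, ‖jterm v q ((‖z‖ * a : ℝ) : ℂ) n‖ with hMz
  have hMy0 : 0 ≤ My := tsum_nonneg (fun n => norm_nonneg _)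
  have hMz0 : 0 ≤ Mz := tsum_nonneg (fun n => norm_nonneg _)
  have hρ0 : (0:ℝ) ≤ q ^ (2 * v + 2 : ℝ) := le_of_lt (b_pos hq0 _)
  have hρ1 : q ^ (2 * v + 2 : ℝ) < 1 := b_lt_one hq0 hq1 (by linarith)
  apply Summable.of_norm_bounded
    (g := fun k => (My * Mz * a ^ (2 * v + 1 : ℝ)) * (q ^ (2 * v + 2 : ℝ)) ^ k)
    ((summable_geometric_of_lt_one hρ0 hρ1).mul_left _)
  intro k
  have hw : (0:ℝ) ≤ (a * q ^ k) ^ (2 * v + 1 : ℝ) :=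
    Real.rpow_nonneg (by positivity) _
  have heq : ‖Fker q v a y z k‖ = q ^ k * ‖jv v q (y * ((a * q ^ k : ℝ) : ℂ))‖ *
      ‖jv v q (z * ((a * q ^ k : ℝ) : ℂ))‖ * ((a * q ^ k) ^ (2 * v + 1 : ℝ)) := by
    rw [Fker, norm_mul, norm_mul, norm_mul, Complex.norm_real, Complex.norm_real,
      Real.norm_of_nonneg (by positivity), Real.norm_of_nonneg hw]
  rw [heq]
  calc q ^ k * ‖jv v q (y * ((a * q ^ k : ℝ) : ℂ))‖ * ‖jv v q (z * ((a * q ^ k : ℝ) : ℂ))‖ *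
        ((a * q ^ k) ^ (2 * v + 1 : ℝ))
      ≤ q ^ k * My * Mz * ((a * q ^ k) ^ (2 * v + 1 : ℝ)) := by
        gcongr
        · exact norm_jv_le hq0 hq1 hv (arg_norm_le hq0 hq1 ha y k)
        · exact norm_jv_le hq0 hq1 hv (arg_norm_le hq0 hq1 ha z k)
    _ = (My * Mz) * (q ^ k * (a * q ^ k) ^ (2 * v + 1 : ℝ)) := by ring
    _ = (My * Mz * a ^ (2 * v + 1 : ℝ)) * (q ^ (2 * v + 2 : ℝ)) ^ k := by
        rw [weight_eq hq0 ha v k]; ring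

lemma G_tendsto (hq0 : 0 < q) (hq1 : q < 1) (hv : -1 < v) (ha : 0 < a) (y z : ℂ) :
    Filter.Tendsto (Gker q v a y z) Filter.atTop (nhds 0) := by
  have hv1 : -1 < v + 1 := by linarith
  set M1 := ∑' n, ‖jterm (v + 1) q ((‖y‖ * a : ℝ) : ℂ) n‖ with hM1
  set M2 := ∑' n, ‖jterm v q ((‖z‖ * (a / q) : ℝ) : ℂ) n‖ with hM2
  set M3 := ∑' n, ‖jterm (v + 1) q ((‖z‖ * a : ℝ) : ℂ) n‖ with hM3
  set M4 := ∑' n, ‖jterm v q ((‖y‖ * (a / q) : ℝ) : ℂ) n‖ with hM4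
  have hM10 : 0 ≤ M1 := tsum_nonneg (fun n => norm_nonneg _)
  have hM20 : 0 ≤ M2 := tsum_nonneg (fun n => norm_nonneg _)
  have hM30 : 0 ≤ M3 := tsum_nonneg (fun n => norm_nonneg _)
  have hM40 : 0 ≤ M4 := tsum_nonneg (fun n => norm_nonneg _)
  have hρ0 : (0:ℝ) ≤ q ^ (2 * v + 2 : ℝ) := le_of_lt (b_pos hq0 _)
  have hρ1 : q ^ (2 * v + 2 : ℝ) < 1 := b_lt_one hq0 hq1 (by linarith)
  have hf : (0:ℝ) < 1 - q ^ (2 * v + 2 : ℝ) := by linarith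
  set C : ℝ := a ^ (2 * v + 1 : ℝ) * (1 - q ^ (2 * v + 2 : ℝ))⁻¹ *
    (‖y‖ ^ 2 * M1 * M2 + ‖z‖ ^ 2 * M3 * M4) with hC
  have htend : Filter.Tendsto (fun k : ℕ => C * (q ^ (2 * v + 2 : ℝ)) ^ k)
      Filter.atTop (nhds 0) := by
    have h := tendsto_pow_atTop_nhds_zero_of_lt_one hρ0 hρ1
    have := h.const_mul C
    simpa using this
  refine squeeze_zero_norm (fun k => ?_) htend
  · rw [G_eq hq0 hq1 hv ha y z k, norm_neg, norm_mul, norm_div, Complex.norm_real,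
      Complex.norm_real, Real.norm_of_nonneg (by positivity),
      Real.norm_of_nonneg (le_of_lt hf)]
    have hXb : ‖y ^ 2 * jv (v + 1) q (y * ((a * q ^ k : ℝ) : ℂ))
          * jv v q (z * ((a * q ^ k : ℝ) : ℂ) / q)
        - z ^ 2 * jv (v + 1) q (z * ((a * q ^ k : ℝ) : ℂ))
          * jv v q (y * ((a * q ^ k : ℝ) : ℂ) / q)‖
        ≤ ‖y‖ ^ 2 * M1 * M2 + ‖z‖ ^ 2 * M3 * M4 := by
      refine (norm_sub_le _ _).trans ?_
      gcongr
      · rw [norm_mul, norm_mul, norm_pow]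
        gcongr
        · exact norm_jv_le hq0 hq1 hv1 (arg_norm_le hq0 hq1 ha y k)
        · exact norm_jv_le hq0 hq1 hv (arg_norm_le' hq0 hq1 ha z k)
      · rw [norm_mul, norm_mul, norm_pow]
        gcongr
        · exact norm_jv_le hq0 hq1 hv1 (arg_norm_le hq0 hq1 ha z k)
        · exact norm_jv_le hq0 hq1 hv (arg_norm_le' hq0 hq1 ha y k)
    calc q ^ k * (a * q ^ k) ^ (2 * v + 1 : ℝ) / (1 - q ^ (2 * v + 2 : ℝ)) * ‖_‖
        ≤ q ^ k * (a * q ^ k) ^ (2 * v + 1 : ℝ) / (1 - q ^ (2 * v + 2 : ℝ)) *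
          (‖y‖ ^ 2 * M1 * M2 + ‖z‖ ^ 2 * M3 * M4) := by
          apply mul_le_mul_of_nonneg_left hXb
          positivity
      _ = C * (q ^ (2 * v + 2 : ℝ)) ^ k := by
          rw [hC, div_eq_mul_inv, weight_eq hq0 ha v k]; ring

end core2

section core3
variable {q v a : ℝ}

lemma key_tsum (hq0 : 0 < q) (hq1 : q < 1) (hv : -1 < v) (ha : 0 < a) (y z : ℂ) :
    (y ^ 2 - z ^ 2) * (∑' k, Fker q v a y z k)
      = ((a ^ (2 * v + 1 : ℝ) : ℝ) : ℂ) / ((1 - q ^ (2 * v + 2 : ℝ) : ℝ) : ℂ) *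
        (y ^ 2 * jv (v + 1) q (y * (a:ℂ)) * jv v q (z * (a:ℂ) / q)
          - z ^ 2 * jv (v + 1) q (z * (a:ℂ)) * jv v q (y * (a:ℂ) / q)) := by
  have hs := summable_Fker hq0 hq1 hv ha y z
  have hs2 : Summable fun k => (y ^ 2 - z ^ 2) * Fker q v a y z k := hs.mul_left _
  set T := ∑' k, (y ^ 2 - z ^ 2) * Fker q v a y z k with hT
  have h1 : HasSum (fun k => Gker q v a y z (k + 1) - Gker q v a y z k) T := by
    have h := hs2.hasSum
    rw [← hT] at h
    rw [funext (step_eq hq0 hq1 hv ha y z)] at h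
    exact h
  have h2 := h1.tendsto_sum_nat
  have h2' : Filter.Tendsto (fun N => Gker q v a y z N - Gker q v a y z 0) Filter.atTop
      (nhds T) := by
    apply h2.congr
    intro N
    exact Finset.sum_range_sub (Gker q v a y z) N
  have h3 := (G_tendsto hq0 hq1 hv ha y z).sub_const (Gker q v a y z 0)
  have hS := tendsto_nhds_unique h2' h3
  calc (y ^ 2 - z ^ 2) * (∑' k, Fker q v a y z k)
      = T := by rw [hT, tsum_mul_left]
    _ = 0 - Gker q v a y z 0 := hS
    _ = - Gker q v a y z 0 := by ring
    _ = _ := by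
        rw [G_eq hq0 hq1 hv ha y z 0]
        simp only [pow_zero, mul_one, one_mul, neg_neg]

lemma jvR_cast (v q x : ℝ) : ((jvR v q x : ℝ) : ℂ) = jv v q ((x : ℝ) : ℂ) := by
  unfold jvR jv
  rw [Complex.ofReal_tsum]
  exact tsum_congr fun n => by push_cast; ring

end core3


/-- the explicit formula for the kernel `k_z(qⁿ)`. -/
theorem kernel_explicit_formula (q v a : ℝ) (hq0 : 0 < q) (hq1 : q < 1) (hv : -1 < v)
    (ha : 0 < a) (z : ℂ) (n : ℤ) (hz : z ^ 2 ≠ (q : ℂ) ^ (2 * n)) :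
    kkerC q v a z ((q : ℝ) ^ n) =
      (((1 - q) * cqv q v ^ 2 / (1 - q ^ (2 * v + 2 : ℝ)) * a ^ (2 * v + 2 : ℝ) : ℝ) : ℂ) *
        (((q : ℂ) ^ (2 * n) * jv (v + 1) q ((a * (q : ℝ) ^ n : ℝ) : ℂ) *
            jv v q (((a / q : ℝ) : ℂ) * z) -
          z ^ 2 * jv (v + 1) q ((a : ℂ) * z) * (jv v q ((a * (q : ℝ) ^ (n - 1) : ℝ) : ℂ))) /
          ((q : ℂ) ^ (2 * n) - z ^ 2)) := by
  have hqc : (q:ℂ) ≠ 0 := by exact_mod_cast ne_of_gt hq0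
  have hbr : (0:ℝ) < 1 - q ^ (2 * v + 2 : ℝ) := by
    have := b_lt_one hq0 hq1 (show (0:ℝ) < 2 * v + 2 by linarith)
    linarith
  set yC : ℂ := (((q:ℝ) ^ n : ℝ) : ℂ) with hyC
  have hy2 : yC ^ 2 = (q:ℂ) ^ (2 * n) := by
    rw [hyC, Complex.ofReal_zpow, sq, ← zpow_add₀ hqc]
    congr 1
    ring
  have hne : yC ^ 2 - z ^ 2 ≠ 0 := by
    rw [hy2]
    exact sub_ne_zero_of_ne (Ne.symm hz)
  -- rewrite kernel as tsum of Fker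
  have hterm : ∀ k : ℕ, ((q ^ k : ℝ) : ℂ) *
      (jv v q (z * ((a * q ^ k : ℝ) : ℂ)) *
        ((jvR v q ((q:ℝ) ^ n * (a * q ^ k)) * (a * q ^ k) ^ (2 * v + 1 : ℝ) : ℝ) : ℂ))
      = Fker q v a yC z k := by
    intro k
    rw [Complex.ofReal_mul (jvR v q ((q:ℝ) ^ n * (a * q ^ k))) ((a * q ^ k) ^ (2 * v + 1 : ℝ)),
      jvR_cast,
      show (((q:ℝ) ^ n * (a * q ^ k) : ℝ) : ℂ) = yC * ((a * q ^ k : ℝ) : ℂ) by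
        rw [hyC]; push_cast; ring,
      Fker]
    ring
  have hker : kkerC q v a z ((q:ℝ) ^ n) = ((cqv q v ^ 2 : ℝ) : ℂ) * (((1 - q) * a : ℝ) : ℂ) *
      ∑' k, Fker q v a yC z k := by
    rw [kkerC, qIntC0, ← tsum_congr hterm]
    ring
  have hk := key_tsum hq0 hq1 hv ha yC z
  have hS : (∑' k, Fker q v a yC z k) =
      (((a ^ (2 * v + 1 : ℝ) : ℝ) : ℂ) / ((1 - q ^ (2 * v + 2 : ℝ) : ℝ) : ℂ) *
        (yC ^ 2 * jv (v + 1) q (yC * (a:ℂ)) * jv v q (z * (a:ℂ) / q)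
          - z ^ 2 * jv (v + 1) q (z * (a:ℂ)) * jv v q (yC * (a:ℂ) / q))) / (yC ^ 2 - z ^ 2) := by
    rw [eq_div_iff hne, mul_comm]
    exact hk
  -- normalize the arguments on the RHS of the goal
  have ha1 : ((a * (q:ℝ) ^ n : ℝ) : ℂ) = yC * (a:ℂ) := by
    rw [hyC]; push_cast; ring
  have ha2 : (((a / q : ℝ) : ℂ)) * z = z * (a:ℂ) / q := by push_cast; ring
  have ha3 : ((a * (q:ℝ) ^ (n - 1) : ℝ) : ℂ) = yC * (a:ℂ) / q := by
    rw [hyC]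
    push_cast
    rw [zpow_sub_one₀ hqc n]
    field_simp
  rw [hker, hS, ha1, ha2, show ((a:ℂ)) * z = z * (a:ℂ) from mul_comm _ _, ha3, ← hy2]
  -- coefficient identity
  have haa : a * a ^ (2 * v + 1 : ℝ) = a ^ (2 * v + 2 : ℝ) := by
    nth_rewrite 1 [show a = a ^ (1:ℝ) from (Real.rpow_one a).symm]
    rw [← Real.rpow_add ha]
    congr 1
    ring
  have hcoefR : cqv q v ^ 2 * ((1 - q) * a) * (a ^ (2 * v + 1 : ℝ) / (1 - q ^ (2 * v + 2 : ℝ)))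
      = (1 - q) * cqv q v ^ 2 / (1 - q ^ (2 * v + 2 : ℝ)) * a ^ (2 * v + 2 : ℝ) := by
    field_simp
    rw [show (2 * (v + 1) : ℝ) = 2 * v + 2 by ring, ← haa]
    ring
  have hcoef : ((cqv q v ^ 2 : ℝ) : ℂ) * (((1 - q) * a : ℝ) : ℂ) *
      (((a ^ (2 * v + 1 : ℝ) : ℝ) : ℂ) / ((1 - q ^ (2 * v + 2 : ℝ) : ℝ) : ℂ))
      = (((1 - q) * cqv q v ^ 2 / (1 - q ^ (2 * v + 2 : ℝ)) * a ^ (2 * v + 2 : ℝ) : ℝ) : ℂ) := by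
    have := congrArg Complex.ofReal hcoefR
    push_cast at this ⊢
    exact this
  linear_combination ((yC ^ 2 * jv (v + 1) q (yC * (a:ℂ)) * jv v q (z * (a:ℂ) / q)
      - z ^ 2 * jv (v + 1) q (z * (a:ℂ)) * jv v q (yC * (a:ℂ) / q)) / (yC ^ 2 - z ^ 2)) * hcoef
end
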